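/- arXiv:2012.11478 — 7 statements merged into one kernel-verified Lean document; each statement's English description precedes it below -/
import Mathlib

section
/- Let x, y ∈ ℝⁿ be nondecreasing vectors. Suppose m < n, the first m entries of x equal a, the remaining n−m entries equal b with a < b. If ∑_{i=1}^n y_i ≤ ∑_{i=1}^n x_i and y_{m+1} ≥ b, then x is weakly majorized from above by y, i.e. for every k with 1 ≤ k ≤ n, ∑_{i=1}^k x_i ≥ ∑_{i=1}^k y_i. -/
open Finset

lemma card_filter_lt_fin (n k : ℕ) (hk : k ≤ n) :
    (Finset.univ.filter (fun i : Fin n => (i : ℕ) < k)).card = k := by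
  have : Finset.univ.filter (fun i : Fin n => (i : ℕ) < k)
      = (Finset.range k).attachFin (fun m hm => lt_of_lt_of_le (Finset.mem_range.1 hm) hk) := by
    ext i; simp
  rw [this, Finset.card_attachFin, Finset.card_range]

/-- Lemma `suffMopt`. If x is nondecreasing with first m entries a and
remaining n-m entries b (a < b), y nondecreasing with total sum ≤ that of x and
y_{m+1} ≥ b, then x is weakly majorized from above by y. -/
theorem stmt_0 (n m : ℕ) (hmn : m < n) (a b : ℝ) (hab : a < b)
    (x y : Fin n → ℝ) (hx : Monotone x) (hy : Monotone y)
    (hxa : ∀ i : Fin n, (i : ℕ) < m → x i = a)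
    (hxb : ∀ i : Fin n, m ≤ (i : ℕ) → x i = b)
    (hsum : ∑ i, y i ≤ ∑ i, x i)
    (hym : b ≤ y ⟨m, hmn⟩) :
    ∀ k, 1 ≤ k → k ≤ n →
      ∑ i ∈ Finset.univ.filter (fun i : Fin n => (i : ℕ) < k), y i ≤
        ∑ i ∈ Finset.univ.filter (fun i : Fin n => (i : ℕ) < k), x i := by
  intro k hk1 hkn
  set P : ℕ → Finset (Fin n) := fun j => Finset.univ.filter (fun i : Fin n => (i : ℕ) < j) with hP
  -- y i ≥ b whenever m ≤ i
  have hyb : ∀ i : Fin n, m ≤ (i : ℕ) → b ≤ y i := by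
    intro i hi
    exact le_trans hym (hy (show (⟨m, hmn⟩ : Fin n) ≤ i from hi))
  -- cardinalities
  have cardP : ∀ j, j ≤ n → (P j).card = j := fun j hj => card_filter_lt_fin n j hj
  have cardNot : ∀ j, j ≤ n →
      (Finset.univ.filter (fun i : Fin n => ¬ (i : ℕ) < j)).card = n - j := by
    intro j hj
    have heq : (Finset.univ.filter (fun i : Fin n => ¬ (i : ℕ) < j))
        = Finset.univ \ (Finset.univ.filter (fun i : Fin n => (i : ℕ) < j)) :=
      Finset.filter_not _ _
    rw [heq, Finset.card_sdiff_of_subset (Finset.filter_subset _ _), Finset.card_univ,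
      Fintype.card_fin, cardP j hj]
  -- total sum of x
  have totx : ∑ i, x i = (m : ℝ) * a + ((n : ℝ) - m) * b := by
    rw [← Finset.sum_filter_add_sum_filter_not Finset.univ (fun i : Fin n => (i : ℕ) < m) x]
    have h1 : ∑ i ∈ Finset.univ.filter (fun i : Fin n => (i : ℕ) < m), x i
        = (m : ℝ) * a := by
      rw [Finset.sum_congr rfl (fun i hi => hxa i (by simpa using hi))]
      rw [Finset.sum_const, cardP m hmn.le, nsmul_eq_mul]
    have h2 : ∑ i ∈ Finset.univ.filter (fun i : Fin n => ¬ (i : ℕ) < m), x i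
        = ((n : ℝ) - m) * b := by
      rw [Finset.sum_congr rfl (fun i hi => hxb i (by simpa using Finset.mem_filter.1 hi |>.2))]
      rw [Finset.sum_const, cardNot m hmn.le, nsmul_eq_mul]
      rw [Nat.cast_sub hmn.le]
    rw [h1, h2]
  -- tail lower bound: for j ≥ m, the sum over {i : ¬ i < j} of y is ≥ (n-j)*b
  have tail_ge : ∀ j, m ≤ j → j ≤ n →
      ((n : ℝ) - j) * b ≤ ∑ i ∈ Finset.univ.filter (fun i : Fin n => ¬ (i : ℕ) < j), y i := by
    intro j hmj hjn
    have := Finset.card_nsmul_le_sum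
      (Finset.univ.filter (fun i : Fin n => ¬ (i : ℕ) < j)) y b
      (fun i hi => hyb i (by
        have := (Finset.mem_filter.1 hi).2
        omega))
    rw [cardNot j hjn, nsmul_eq_mul, Nat.cast_sub hjn] at this
    exact this
  by_cases hkm : m < k
  · -- case k > m
    have hsplity : ∑ i ∈ P k, y i
        + ∑ i ∈ Finset.univ.filter (fun i : Fin n => ¬ (i : ℕ) < k), y i = ∑ i, y i :=
      Finset.sum_filter_add_sum_filter_not Finset.univ (fun i : Fin n => (i : ℕ) < k) y
    have htail := tail_ge k hkm.le hkn
    -- prefix of x: m*a + (k-m)*b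
    have hpx : ∑ i ∈ P k, x i = (m : ℝ) * a + ((k : ℝ) - m) * b := by
      rw [← Finset.sum_filter_add_sum_filter_not (P k) (fun i : Fin n => (i : ℕ) < m) x]
      have hPeq : (P k).filter (fun i : Fin n => (i : ℕ) < m) = P m := by
        ext i; simp only [hP, Finset.mem_filter, Finset.mem_univ, true_and]; omega
      have hcard2 : ((P k).filter (fun i : Fin n => ¬ (i : ℕ) < m)).card = k - m := by
        have h := Finset.card_filter_add_card_filter_not
          (s := P k) (p := fun i : Fin n => (i : ℕ) < m)
        rw [hPeq, cardP m hmn.le, cardP k hkn] at h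
        omega
      have h1 : ∑ i ∈ (P k).filter (fun i : Fin n => (i : ℕ) < m), x i = (m : ℝ) * a := by
        rw [hPeq, Finset.sum_congr rfl (fun i hi => hxa i (by simpa [hP] using hi)),
          Finset.sum_const, cardP m hmn.le, nsmul_eq_mul]
      have h2 : ∑ i ∈ (P k).filter (fun i : Fin n => ¬ (i : ℕ) < m), x i
          = ((k : ℝ) - m) * b := by
        rw [Finset.sum_congr rfl
          (fun i hi => hxb i (by
            have := (Finset.mem_filter.1 hi).2; omega)),
          Finset.sum_const, hcard2, nsmul_eq_mul, Nat.cast_sub hkm.le]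
      rw [h1, h2]
    rw [hpx]
    rw [totx] at hsum
    linarith
  · -- case k ≤ m
    push_neg at hkm
    -- prefix of x is k*a
    have hpx : ∑ i ∈ P k, x i = (k : ℝ) * a := by
      rw [Finset.sum_congr rfl (fun i hi => hxa i (by
        have : (i : ℕ) < k := by simpa [hP] using hi
        omega)), Finset.sum_const, cardP k hkn, nsmul_eq_mul]
    rw [hpx]
    -- sum over P m of y is ≤ m * a
    have hSm : ∑ i ∈ P m, y i ≤ (m : ℝ) * a := by
      have hsplity : ∑ i ∈ P m, y i
          + ∑ i ∈ Finset.univ.filter (fun i : Fin n => ¬ (i : ℕ) < m), y i = ∑ i, y i :=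
        Finset.sum_filter_add_sum_filter_not Finset.univ (fun i : Fin n => (i : ℕ) < m) y
      have htail := tail_ge m le_rfl hmn.le
      rw [totx] at hsum
      linarith
    -- j is the (k-1)-th index
    have hj : k - 1 < n := by omega
    set j : Fin n := ⟨k - 1, hj⟩ with hjdef
    -- split P m along < k
    have hPeq : (P m).filter (fun i : Fin n => (i : ℕ) < k) = P k := by
      ext i; simp only [hP, Finset.mem_filter, Finset.mem_univ, true_and]; omega
    have hsplit := Finset.sum_filter_add_sum_filter_not (P m)
      (fun i : Fin n => (i : ℕ) < k) y
    rw [hPeq] at hsplit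
    have hcardmid : ((P m).filter (fun i : Fin n => ¬ (i : ℕ) < k)).card = m - k := by
      have h := Finset.card_filter_add_card_filter_not
        (s := P m) (p := fun i : Fin n => (i : ℕ) < k)
      rw [hPeq, cardP k hkn, cardP m hmn.le] at h
      omega
    have hmid : ((m : ℝ) - k) * y j
        ≤ ∑ i ∈ (P m).filter (fun i : Fin n => ¬ (i : ℕ) < k), y i := by
      have := Finset.card_nsmul_le_sum ((P m).filter (fun i : Fin n => ¬ (i : ℕ) < k)) y (y j)
        (fun i hi => hy (show j ≤ i by
          have := (Finset.mem_filter.1 hi).2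
          show (j : ℕ) ≤ (i : ℕ)
          simp only [hjdef]
          omega))
      rw [hcardmid, nsmul_eq_mul, Nat.cast_sub hkm] at this
      exact this
    by_cases hya : y j ≤ a
    · -- all first k entries of y are ≤ y j ≤ a
      have := Finset.sum_le_card_nsmul (P k) y (y j)
        (fun i hi => hy (show i ≤ j by
          have : (i : ℕ) < k := by simpa [hP] using hi
          show (i : ℕ) ≤ (j : ℕ)
          simp only [hjdef]
          omega))
      rw [cardP k hkn, nsmul_eq_mul] at this
      have hk0 : (0 : ℝ) ≤ k := by positivity
      nlinarith
    · push_neg at hya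
      have hmk : (0 : ℝ) ≤ (m : ℝ) - k := by
        have : (k : ℝ) ≤ m := by exact_mod_cast hkm
        linarith
      nlinarith
end

section
/- If A and B are real symmetric n×n matrices with A − B positive semidefinite, then the vector of eigenvalues of A (in nondecreasing order) is weakly majorized from above by the vector of eigenvalues of B, i.e. for each k, the sum of the k smallest eigenvalues of A is at least the sum of the k smallest eigenvalues of B. -/
open Finset

/-- The threshold/rearrangement lemma: for `0 ≤ t ≤ 1` with total mass `k`,
`∑ λ_j t_j` is at least the sum of the `k` smallest values of `λ`. -/
lemma key_sum (n k : ℕ) (hk : k ≤ n) (lam : Fin n → ℝ) (σ : Equiv.Perm (Fin n))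
    (hmono : Monotone (lam ∘ σ)) (t : Fin n → ℝ)
    (ht0 : ∀ j, 0 ≤ t j) (ht1 : ∀ j, t j ≤ 1)
    (hsum : ∑ j, t j = (k : ℝ)) :
    ∑ i ∈ Finset.univ.filter (fun i : Fin n => (i : ℕ) < k), lam (σ i)
      ≤ ∑ j, lam j * t j := by
  rcases Nat.eq_zero_or_pos k with rfl | hkpos
  · have hz : ∀ j : Fin n, t j = 0 := fun j =>
      (Finset.sum_eq_zero_iff_of_nonneg (fun j _ => ht0 j)).1 (by simpa using hsum) j (mem_univ j)
    have h1 : ∑ i ∈ Finset.univ.filter (fun i : Fin n => (i : ℕ) < 0), lam (σ i) = 0 := by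
      simp
    rw [h1]
    apply Finset.sum_nonneg
    intro j _
    rw [hz j]
    simp
  · set F := Finset.univ.filter (fun i : Fin n => (i : ℕ) < k) with hF
    set S := F.image σ with hS
    have hκ : k - 1 < n := by omega
    set μ : ℝ := lam (σ ⟨k - 1, hκ⟩) with hμ
    have hcardF : F.card = k := card_filter_lt_fin n k hk
    have hcardS : S.card = k := by
      rw [hS, Finset.card_image_of_injective _ σ.injective, hcardF]
    -- λ values on S are ≤ μ
    have hle : ∀ j ∈ S, lam j ≤ μ := by
      intro j hj
      rw [hS, Finset.mem_image] at hj
      obtain ⟨i, hi, rfl⟩ := hj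
      rw [hF, mem_filter] at hi
      refine hmono ?_
      rw [Fin.le_def]
      have : (i : ℕ) < k := hi.2
      show (i : ℕ) ≤ k - 1
      omega
    -- λ values off S are ≥ μ
    have hge : ∀ j ∉ S, μ ≤ lam j := by
      intro j hj
      have : σ (σ.symm j) = j := σ.apply_symm_apply j
      have hnot : σ.symm j ∉ F := by
        intro h
        exact hj (by rw [hS, Finset.mem_image]; exact ⟨_, h, this⟩)
      rw [hF, mem_filter] at hnot
      push_neg at hnot
      have hki : k ≤ (σ.symm j : ℕ) := hnot (mem_univ _)
      have hmm := hmono (show (⟨k - 1, hκ⟩ : Fin n) ≤ σ.symm j by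
        rw [Fin.le_def]; show k - 1 ≤ (σ.symm j : ℕ); omega)
      simpa [this] using hmm
    -- sorted sum equals sum over S
    have hLHS : ∑ i ∈ F, lam (σ i) = ∑ j ∈ S, lam j := by
      rw [hS, Finset.sum_image (fun a _ b _ h => σ.injective h)]
    rw [hLHS]
    -- split RHS
    have hsplit : ∑ j, lam j * t j = ∑ j ∈ S, lam j * t j + ∑ j ∈ Sᶜ, lam j * t j :=
      (Finset.sum_add_sum_compl S _).symm
    have htS : ∑ j ∈ S, t j + ∑ j ∈ Sᶜ, t j = (k : ℝ) := by
      rw [Finset.sum_add_sum_compl]; exact hsum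
    have h1 : ∑ j ∈ S, lam j - ∑ j ∈ S, lam j * t j ≤ μ * ((k : ℝ) - ∑ j ∈ S, t j) := by
      have : ∑ j ∈ S, lam j - ∑ j ∈ S, lam j * t j = ∑ j ∈ S, lam j * (1 - t j) := by
        rw [← Finset.sum_sub_distrib]; congr 1; ext j; ring
      rw [this]
      calc ∑ j ∈ S, lam j * (1 - t j) ≤ ∑ j ∈ S, μ * (1 - t j) := by
            apply Finset.sum_le_sum
            intro j hj
            exact mul_le_mul_of_nonneg_right (hle j hj) (by linarith [ht1 j])
      _ = μ * ((k : ℝ) - ∑ j ∈ S, t j) := by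
            rw [← Finset.mul_sum]
            congr 1
            rw [Finset.sum_sub_distrib]
            simp [hcardS]
    have h2 : μ * ((k : ℝ) - ∑ j ∈ S, t j) ≤ ∑ j ∈ Sᶜ, lam j * t j := by
      have hc : (k : ℝ) - ∑ j ∈ S, t j = ∑ j ∈ Sᶜ, t j := by linarith
      rw [hc, Finset.mul_sum]
      apply Finset.sum_le_sum
      intro j hj
      exact mul_le_mul_of_nonneg_right (hge j (by simpa using hj)) (ht0 j)
    linarith [hsplit, h1, h2]

open Matrix in
lemma inner_toEuclideanLin_real {n : ℕ} (M : Matrix (Fin n) (Fin n) ℝ)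
    (x : EuclideanSpace ℝ (Fin n)) :
    (inner ℝ x (Matrix.toEuclideanLin M x) : ℝ)
      = (WithLp.equiv 2 (Fin n → ℝ) x) ⬝ᵥ (M *ᵥ (WithLp.equiv 2 (Fin n → ℝ) x)) := by
  simp [Matrix.toEuclideanLin_apply, PiLp.inner_apply, dotProduct, mul_comm]

open Matrix in
lemma toEuclideanLin_eigen {n : ℕ} (M : Matrix (Fin n) (Fin n) ℝ) (hM : M.IsHermitian)
    (j : Fin n) :
    Matrix.toEuclideanLin M (hM.eigenvectorBasis j)
      = hM.eigenvalues j • hM.eigenvectorBasis j := by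
  have h := hM.mulVec_eigenvectorBasis j
  ext i
  have := congrFun h i
  simpa [Matrix.toEuclideanLin_apply] using this

open Matrix in
lemma quad_form_eq {n : ℕ} (M : Matrix (Fin n) (Fin n) ℝ) (hM : M.IsHermitian)
    (x : EuclideanSpace ℝ (Fin n)) :
    (inner ℝ x (Matrix.toEuclideanLin M x) : ℝ)
      = ∑ j, hM.eigenvalues j * (inner ℝ (hM.eigenvectorBasis j) x : ℝ)^2 := by
  have hsymm : LinearMap.IsSymmetric (Matrix.toEuclideanLin M) :=
    (Matrix.isHermitian_iff_isSymmetric.1 hM)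
  rw [← (hM.eigenvectorBasis).sum_inner_mul_inner x (Matrix.toEuclideanLin M x)]
  apply Finset.sum_congr rfl
  intro j _
  have h1 : (inner ℝ (hM.eigenvectorBasis j) (Matrix.toEuclideanLin M x) : ℝ)
      = hM.eigenvalues j * inner ℝ (hM.eigenvectorBasis j) x := by
    rw [← hsymm (hM.eigenvectorBasis j) x, toEuclideanLin_eigen M hM j,
      real_inner_smul_left]
  rw [h1, real_inner_comm x (hM.eigenvectorBasis j)]
  ring

/-- If A, B are real symmetric n×n matrices with A − B positive
semidefinite, then the nondecreasing vector of eigenvalues of A weakly majorizes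
from above that of B: each partial sum of the k smallest eigenvalues of A is at
least the corresponding sum for B. -/
theorem stmt_2 (n : ℕ) (A B : Matrix (Fin n) (Fin n) ℝ)
    (hA : A.IsHermitian) (hB : B.IsHermitian) (hAB : (A - B).PosSemidef) :
    ∀ k, k ≤ n →
      ∑ i ∈ Finset.univ.filter (fun i : Fin n => (i : ℕ) < k),
          (hB.eigenvalues ∘ Tuple.sort hB.eigenvalues) i ≤
        ∑ i ∈ Finset.univ.filter (fun i : Fin n => (i : ℕ) < k),
          (hA.eigenvalues ∘ Tuple.sort hA.eigenvalues) i := by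
  intro k hk
  set σ := Tuple.sort hA.eigenvalues with hσ
  set τ := Tuple.sort hB.eigenvalues with hτ
  set F := Finset.univ.filter (fun i : Fin n => (i : ℕ) < k) with hF
  set u : Fin n → EuclideanSpace ℝ (Fin n) := fun i => hA.eigenvectorBasis (σ i) with hu
  set w : Fin n → EuclideanSpace ℝ (Fin n) := fun j => hB.eigenvectorBasis j with hw
  -- A-side quadratic form values
  have hAterm : ∀ i, (inner ℝ (u i) (Matrix.toEuclideanLin A (u i)) : ℝ)
      = hA.eigenvalues (σ i) := by
    intro i
    rw [hu, toEuclideanLin_eigen A hA, real_inner_smul_right,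
      real_inner_self_eq_norm_sq, hA.eigenvectorBasis.orthonormal.1 (σ i)]
    ring
  -- PSD comparison
  have hcomp : ∀ x : EuclideanSpace ℝ (Fin n),
      (inner ℝ x (Matrix.toEuclideanLin B x) : ℝ) ≤ inner ℝ x (Matrix.toEuclideanLin A x) := by
    intro x
    have h0 : (0:ℝ) ≤ inner ℝ x (Matrix.toEuclideanLin (A - B) x) := by
      rw [inner_toEuclideanLin_real]
      have := hAB.dotProduct_mulVec_nonneg (WithLp.equiv 2 (Fin n → ℝ) x)
      simpa using this
    have hsub : Matrix.toEuclideanLin (A - B) x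
        = Matrix.toEuclideanLin A x - Matrix.toEuclideanLin B x := by
      rw [map_sub]; rfl
    rw [hsub, inner_sub_right] at h0
    linarith
  -- Bessel bounds
  set t : Fin n → ℝ := fun j => ∑ i ∈ F, (inner ℝ (w j) (u i) : ℝ)^2 with ht
  have horth : Orthonormal ℝ u := hA.eigenvectorBasis.orthonormal.comp σ σ.injective
  have ht0 : ∀ j, 0 ≤ t j := fun j => Finset.sum_nonneg fun i _ => sq_nonneg _
  have ht1 : ∀ j, t j ≤ 1 := by
    intro j
    have hb := horth.sum_inner_products_le (s := F) (w j)
    have hn : ‖w j‖ = 1 := hB.eigenvectorBasis.orthonormal.1 j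
    rw [ht]
    calc ∑ i ∈ F, (inner ℝ (w j) (u i) : ℝ)^2
        = ∑ i ∈ F, ‖(inner ℝ (u i) (w j) : ℝ)‖^2 := by
          apply Finset.sum_congr rfl
          intro i _
          rw [real_inner_comm, Real.norm_eq_abs, sq_abs]
    _ ≤ ‖w j‖^2 := hb
    _ = 1 := by rw [hn]; norm_num
  have hts : ∑ j, t j = (k : ℝ) := by
    rw [ht, Finset.sum_comm]
    have hinner : ∀ i, ∑ j, (inner ℝ (w j) (u i) : ℝ)^2 = 1 := by
      intro i
      have hp := hB.eigenvectorBasis.sum_inner_mul_inner (u i) (u i)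
      have hn : ‖u i‖ = 1 := horth.1 i
      calc ∑ j, (inner ℝ (w j) (u i) : ℝ)^2
          = ∑ j, (inner ℝ (u i) (w j) : ℝ) * inner ℝ (w j) (u i) := by
            apply Finset.sum_congr rfl
            intro j _
            rw [real_inner_comm (u i) (w j)]; ring
      _ = inner ℝ (u i) (u i) := hp
      _ = 1 := by rw [real_inner_self_eq_norm_sq, hn]; norm_num
    rw [Finset.sum_congr rfl fun i _ => hinner i, Finset.sum_const,
      card_filter_lt_fin n k hk]
    simp
  -- chain of inequalities
  have hkey := key_sum n k hk hB.eigenvalues τ (Tuple.monotone_sort hB.eigenvalues)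
    t ht0 ht1 hts
  have hmid : ∑ j, hB.eigenvalues j * t j
      = ∑ i ∈ F, (inner ℝ (u i) (Matrix.toEuclideanLin B (u i)) : ℝ) := by
    have : ∀ j, hB.eigenvalues j * t j
        = ∑ i ∈ F, hB.eigenvalues j * (inner ℝ (w j) (u i) : ℝ)^2 := by
      intro j; rw [ht, Finset.mul_sum]
    rw [Finset.sum_congr rfl fun j _ => this j, Finset.sum_comm]
    apply Finset.sum_congr rfl
    intro i _
    rw [quad_form_eq B hB (u i)]
  have hstep : ∑ i ∈ F, (inner ℝ (u i) (Matrix.toEuclideanLin B (u i)) : ℝ)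
      ≤ ∑ i ∈ F, (inner ℝ (u i) (Matrix.toEuclideanLin A (u i)) : ℝ) :=
    Finset.sum_le_sum fun i _ => hcomp (u i)
  have hfin : ∑ i ∈ F, (inner ℝ (u i) (Matrix.toEuclideanLin A (u i)) : ℝ)
      = ∑ i ∈ F, (hA.eigenvalues ∘ σ) i :=
    Finset.sum_congr rfl fun i _ => hAterm i
  calc ∑ i ∈ F, (hB.eigenvalues ∘ τ) i ≤ ∑ j, hB.eigenvalues j * t j := hkey
  _ = ∑ i ∈ F, (inner ℝ (u i) (Matrix.toEuclideanLin B (u i)) : ℝ) := hmid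
  _ ≤ ∑ i ∈ F, (inner ℝ (u i) (Matrix.toEuclideanLin A (u i)) : ℝ) := hstep
  _ = ∑ i ∈ F, (hA.eigenvalues ∘ σ) i := hfin
end

section
/- Let A be an n×n positive semidefinite real matrix with all row sums zero, rank(A) ≤ ρ, and trace(A) ≥ T. Let a = T/ρ and d ≥ a, and set C = d·K_n − A where K_n = I_n − (1/n)J_n. Define γ ∈ ℝⁿ by γ_0 = 0, γ_i = d − a for 1 ≤ i ≤ ρ, and γ_i = d for ρ+1 ≤ i ≤ n−1. Then γ is weakly majorized from above by the vector of eigenvalues of C in nondecreasing order: for every k, ∑_{i<k} γ_i ≥ ∑_{i<k} μ_i(C). -/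
open Matrix Polynomial RealInnerProductSpace

section AuxLemmas

lemma aux_mono_sum {n : ℕ} {h : Fin n → ℝ} (hm : Monotone h) (s : Finset (Fin n)) :
    ∑ i ∈ Finset.univ.filter (fun i : Fin n => (i : ℕ) < s.card), h i ≤ ∑ j ∈ s, h j := by
  classical
  set k := s.card with hk
  have hkn : k ≤ n := by simpa using Finset.card_le_univ s
  set φ : Fin k → Fin n := fun i => ((s.orderIsoOfFin rfl i : Fin n)) with hφ
  have hφmono : StrictMono φ := by
    intro i j hij
    have := (s.orderIsoOfFin rfl).strictMono hij
    simpa [hφ, ← Subtype.coe_lt_coe] using this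
  have hle : ∀ i : Fin k, (i : ℕ) ≤ (φ i : ℕ) := by
    intro i
    obtain ⟨j, hj⟩ := i
    induction j with
    | zero => simp
    | succ j ih =>
      have hj' : j < k := Nat.lt_of_succ_lt hj
      have h1 : (φ ⟨j, hj'⟩ : ℕ) < (φ ⟨j + 1, hj⟩ : ℕ) := by
        exact hφmono (by simp [Fin.lt_def])
      have h2 := ih hj'
      simp only [Fin.val_mk] at h1 h2 ⊢
      omega
  have himg : Finset.univ.filter (fun i : Fin n => (i : ℕ) < k)
      = (Finset.univ : Finset (Fin k)).image (Fin.castLE hkn) := by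
    ext i
    simp only [Finset.mem_filter, Finset.mem_univ, true_and, Finset.mem_image]
    constructor
    · intro hi; exact ⟨⟨(i : ℕ), hi⟩, by simp [Fin.ext_iff]⟩
    · rintro ⟨b, rfl⟩; simpa using b.2
  rw [himg, Finset.sum_image (by intro a _ b _ hab; exact Fin.castLE_injective hkn hab)]
  have hsum2 : ∑ i : Fin k, h (φ i) = ∑ j ∈ s, h j := by
    rw [← Finset.sum_coe_sort s h]
    exact Fintype.sum_equiv (s.orderIsoOfFin rfl).toEquiv _ _ (fun i => rfl)
  calc ∑ i : Fin k, h (Fin.castLE hkn i) ≤ ∑ i : Fin k, h (φ i) := by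
        apply Finset.sum_le_sum
        intro i _
        exact hm (by rw [Fin.le_def]; simpa using hle i)
    _ = ∑ j ∈ s, h j := hsum2

lemma aux_sort_min {n : ℕ} (f : Fin n → ℝ) (s : Finset (Fin n)) :
    ∑ i ∈ Finset.univ.filter (fun i : Fin n => (i : ℕ) < s.card),
      (f ∘ Tuple.sort f) i ≤ ∑ j ∈ s, f j := by
  classical
  have hmono := Tuple.monotone_sort f
  set σ := Tuple.sort f with hσ
  set s' : Finset (Fin n) := s.image σ.symm with hs'
  have hcard : s'.card = s.card := Finset.card_image_of_injective _ σ.symm.injective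
  have := aux_mono_sum hmono s'
  rw [hcard] at this
  refine this.trans ?_
  rw [hs', Finset.sum_image (by intro a _ b _ hab; exact σ.symm.injective hab)]
  apply le_of_eq
  apply Finset.sum_congr rfl
  intro x _
  simp

lemma aux_ofFn_multiset {n : ℕ} (f : Fin n → ℝ) :
    (↑(List.ofFn f) : Multiset ℝ) = Multiset.map f Finset.univ.val := by
  rw [List.ofFn_eq_map, Fin.univ_def]
  rfl

lemma aux_perm_multiset {n : ℕ} (f : Fin n → ℝ) (σ : Equiv.Perm (Fin n)) :
    Multiset.map (f ∘ σ) Finset.univ.val = Multiset.map f Finset.univ.val := by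
  have h1 : Finset.univ.val.map (σ : Fin n → Fin n) = Finset.univ.val := by
    have h := Finset.map_univ_equiv σ
    calc Finset.univ.val.map (σ : Fin n → Fin n)
        = (Finset.univ.map σ.toEmbedding).val := rfl
      _ = Finset.univ.val := by rw [h]
  calc Multiset.map (f ∘ σ) Finset.univ.val
      = Multiset.map f (Finset.univ.val.map (σ : Fin n → Fin n)) := by
        rw [Multiset.map_map]
    _ = Multiset.map f Finset.univ.val := by rw [h1]

lemma aux_sorted_eq {n : ℕ} {f g : Fin n → ℝ}
    (hfg : Multiset.map f Finset.univ.val = Multiset.map g Finset.univ.val) :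
    f ∘ Tuple.sort f = g ∘ Tuple.sort g := by
  apply List.ofFn_injective
  refine (fun hp h1 h2 => List.Perm.eq_of_sortedLE h1 h2 hp) ?_ ?_ ?_
  · rw [← Multiset.coe_eq_coe]
    rw [aux_ofFn_multiset, aux_ofFn_multiset, aux_perm_multiset, aux_perm_multiset, hfg]
  · exact (Tuple.monotone_sort f).sortedLE_ofFn
  · exact (Tuple.monotone_sort g).sortedLE_ofFn

lemma aux_charpoly_diagonal {N : ℕ} (g : Fin N → ℝ) :
    (Matrix.diagonal g).charpoly = ∏ i, (X - C (g i)) := by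
  rw [Matrix.charpoly]
  have h1 : charmatrix (Matrix.diagonal g) = Matrix.diagonal (fun i => X - C (g i)) := by
    ext i j
    by_cases hij : i = j
    · subst hij; simp [charmatrix_apply_eq]
    · simp [charmatrix_apply_ne _ _ _ hij, Matrix.diagonal_apply_ne _ hij]
  rw [h1, Matrix.det_diagonal]

lemma aux_diag {N : ℕ} (hN : 0 < N) (M : Matrix (Fin N) (Fin N) ℝ)
    (u : Fin N → (Fin N → ℝ))
    (hli : LinearIndependent ℝ u) (g : Fin N → ℝ)
    (hMu : ∀ j, M.mulVec (u j) = g j • u j) :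
    M.charpoly = ∏ i, (X - C (g i)) ∧ M.trace = ∑ i, g i := by
  classical
  haveI : Nonempty (Fin N) := ⟨⟨0, hN⟩⟩
  have hcard : Fintype.card (Fin N) = Module.finrank ℝ (Fin N → ℝ) := by
    simp
  let B : Module.Basis (Fin N) ℝ (Fin N → ℝ) := basisOfLinearIndependentOfCardEqFinrank hli hcard
  have hB : ⇑B = u := coe_basisOfLinearIndependentOfCardEqFinrank hli hcard
  have hBM : LinearMap.toMatrix B B (Matrix.toLin' M) = Matrix.diagonal g := by
    ext i j
    rw [LinearMap.toMatrix_apply, Matrix.toLin'_apply, hB, hMu, _root_.map_smul,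
      ← hB, Module.Basis.repr_self]
    by_cases hij : i = j
    · subst hij; simp
    · simp [Finsupp.single_apply, Ne.symm hij, Matrix.diagonal_apply_ne _ hij]
  have hMchar : M.charpoly = (Matrix.toLin' M).charpoly := by
    conv_lhs => rw [← LinearMap.toMatrix'_toLin' M]
    rw [← LinearMap.toMatrix_eq_toMatrix']
    exact LinearMap.charpoly_toMatrix _ _
  have hMtr : M.trace = LinearMap.trace ℝ _ (Matrix.toLin' M) := by
    conv_lhs => rw [← LinearMap.toMatrix'_toLin' M]
    rw [← LinearMap.toMatrix_eq_toMatrix']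
    exact (LinearMap.trace_eq_matrix_trace ℝ _ _).symm
  constructor
  · rw [hMchar, ← LinearMap.charpoly_toMatrix (Matrix.toLin' M) B, hBM,
      aux_charpoly_diagonal]
  · rw [hMtr, LinearMap.trace_eq_matrix_trace ℝ B, hBM, Matrix.trace_diagonal]

lemma aux_herm {N : ℕ} (hN : 0 < N) {M : Matrix (Fin N) (Fin N) ℝ} (hM : M.IsHermitian) :
    M.charpoly = ∏ i, (X - C (hM.eigenvalues i)) := by
  have hli : LinearIndependent ℝ (fun j => (⇑(hM.eigenvectorBasis j) : Fin N → ℝ)) := by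
    have h1 : LinearIndependent ℝ (fun j => hM.eigenvectorBasis j) :=
      hM.eigenvectorBasis.orthonormal.linearIndependent
    have h2 := h1.map' (WithLp.linearEquiv 2 ℝ (∀ _ : Fin N, ℝ)).toLinearMap
      (LinearEquiv.ker _)
    exact h2
  exact (aux_diag hN M _ hli hM.eigenvalues
    (fun j => hM.mulVec_eigenvectorBasis j)).1

lemma aux_roots {N : ℕ} (f : Fin N → ℝ) :
    (∏ i, (X - C (f i))).roots = Multiset.map f Finset.univ.val := by
  rw [Finset.prod_eq_multiset_prod]
  have h1 : Finset.univ.val.map (fun i => X - C (f i))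
      = (Finset.univ.val.map f).map (fun a => X - C a) := by
    rw [Multiset.map_map]; rfl
  rw [h1, Polynomial.roots_multiset_prod_X_sub_C]

lemma aux_zero {m ρ : ℕ} {β : Fin m → ℝ} (hmono : Monotone β) (h0 : ∀ j, 0 ≤ β j)
    (hcard : ∀ s : Finset (Fin m), (∀ j ∈ s, β j ≠ 0) → s.card ≤ ρ) :
    ∀ j : Fin m, (j : ℕ) < m - ρ → β j = 0 := by
  intro j hj
  by_contra hne
  have hpos : 0 < β j := (h0 j).lt_of_ne (Ne.symm hne)
  have h1 : ∀ i ∈ Finset.Ici j, β i ≠ 0 := fun i hi =>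
    ne_of_gt (lt_of_lt_of_le hpos (hmono (Finset.mem_Ici.1 hi)))
  have h2 := hcard (Finset.Ici j) h1
  rw [Fin.card_Ici] at h2
  omega

lemma aux_filter_sum {n k : ℕ} (hk : k ≤ n) (F : Fin n → ℝ) (G : ℕ → ℝ)
    (hFG : ∀ i : Fin n, F i = G i.val) :
    ∑ i ∈ Finset.univ.filter (fun i : Fin n => (i : ℕ) < k), F i
      = ∑ j ∈ Finset.range k, G j := by
  classical
  have himg : Finset.univ.filter (fun i : Fin n => (i : ℕ) < k)
      = (Finset.univ : Finset (Fin k)).image (Fin.castLE hk) := by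
    ext i
    simp only [Finset.mem_filter, Finset.mem_univ, true_and, Finset.mem_image]
    constructor
    · intro hi; exact ⟨⟨(i : ℕ), hi⟩, by simp [Fin.ext_iff]⟩
    · rintro ⟨b, rfl⟩; simpa using b.2
  rw [himg, Finset.sum_image (by intro a _ b _ hab; exact Fin.castLE_injective hk hab)]
  rw [← Fin.sum_univ_eq_sum_range]
  apply Finset.sum_congr rfl
  intro i _
  rw [hFG]
  rfl

lemma aux_decomp {m : ℕ} (A : Matrix (Fin (m+1)) (Fin (m+1)) ℝ) (hA : A.PosSemidef)
    (hrow : A.mulVec (fun _ => 1) = 0) :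
    ∃ (u : Fin (m+1) → (Fin (m+1) → ℝ)) (β : Fin m → ℝ),
      LinearIndependent ℝ u ∧
      Monotone β ∧ (∀ j, 0 ≤ β j) ∧
      (∀ s : Finset (Fin m), (∀ j ∈ s, β j ≠ 0) → s.card ≤ A.rank) ∧
      (A.mulVec (u 0) = 0) ∧
      (∀ j : Fin m, A.mulVec (u (Fin.succ j)) = β j • u (Fin.succ j)) ∧
      (∀ j : Fin m, ∑ i, u (Fin.succ j) i = 0) ∧
      (∃ c : ℝ, c ≠ 0 ∧ u 0 = fun _ => c) := by
  classical
  have hm1 : (0:ℝ) < (m+1 : ℝ) := by positivity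
  set c : ℝ := (Real.sqrt (m+1))⁻¹ with hc
  have hcpos : 0 < c := by
    rw [hc]
    exact inv_pos.2 (Real.sqrt_pos.2 hm1)
  have hc2 : c * c * (m+1) = 1 := by
    rw [hc, ← mul_inv, Real.mul_self_sqrt hm1.le]
    exact inv_mul_cancel₀ hm1.ne'
  set v : EuclideanSpace ℝ (Fin (m+1)) := WithLp.toLp 2 (fun _ => c) with hv
  have hvinner : ∀ x : EuclideanSpace ℝ (Fin (m+1)), ⟪v, x⟫ = c * ∑ i, x i := by
    intro x
    rw [PiLp.inner_apply]
    simp [hv, Finset.mul_sum]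
    exact Finset.sum_congr rfl fun i _ => mul_comm _ _
  have hvv : ⟪v, v⟫ = 1 := by
    rw [hvinner]
    simp [hv]
    nlinarith [hc2]
  have hvne : v ≠ 0 := by
    intro h
    rw [h] at hvv
    simp at hvv
  haveI : Fact (Module.finrank ℝ (EuclideanSpace ℝ (Fin (m+1))) = m + 1) :=
    ⟨by simp⟩
  set W := (ℝ ∙ v)ᗮ with hW
  have hWrank : Module.finrank ℝ W = m := Submodule.finrank_orthogonal_span_singleton hvne
  set T := Matrix.toEuclideanLin A with hT
  have hTsymm : T.IsSymmetric := (Matrix.isHermitian_iff_isSymmetric.1 hA.1)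
  have hTapp : ∀ x : EuclideanSpace ℝ (Fin (m+1)), T x = A.mulVec x := fun x => rfl
  have hvsmul : v = WithLp.toLp 2 (c • (fun _ => (1:ℝ))) := by
    rw [hv]; congr 1; funext i; simp
  have hTv : T v = 0 := by
    rw [hvsmul, hT, Matrix.toEuclideanLin_apply]
    show WithLp.toLp 2 (A.mulVec (c • fun _ => (1:ℝ))) = 0
    rw [Matrix.mulVec_smul, hrow, smul_zero, WithLp.toLp_zero]
  have hWinv : ∀ x ∈ W, T x ∈ W := by
    intro x hx
    rw [hW, Submodule.mem_orthogonal]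
    intro y hy
    obtain ⟨r, rfl⟩ := Submodule.mem_span_singleton.1 hy
    rw [real_inner_smul_left]
    rw [← hTsymm v x, hTv]
    simp
  set T' := T.restrict hWinv with hT'
  have hT'symm : T'.IsSymmetric := hTsymm.restrict_invariant hWinv
  set b0 := hT'symm.eigenvectorBasis hWrank with hb0
  set β0 := hT'symm.eigenvalues hWrank with hβ0
  set π := Tuple.sort β0 with hπ
  set β : Fin m → ℝ := β0 ∘ π with hβ
  have hβmono : Monotone β := Tuple.monotone_sort β0
  set b : Fin m → W := fun j => b0 (π j) with hb
  have hborth : Orthonormal ℝ b := b0.orthonormal.comp π π.injective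
  have hTb : ∀ j : Fin m, T ((b j : EuclideanSpace ℝ (Fin (m+1)))) =
      β j • ((b j : EuclideanSpace ℝ (Fin (m+1)))) := by
    intro j
    have h1 : T' (b j) = β j • b j := hT'symm.apply_eigenvectorBasis hWrank (π j)
    have h2 := congrArg (Subtype.val) h1
    simpa [hT'] using h2
  have hvb : ∀ j : Fin m, ⟪v, ((b j : EuclideanSpace ℝ (Fin (m+1))))⟫ = 0 := by
    intro j
    exact Submodule.inner_right_of_mem_orthogonal (Submodule.mem_span_singleton_self v) (b j).2
  set uE : Fin (m+1) → EuclideanSpace ℝ (Fin (m+1)) :=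
    Fin.cons v (fun j => ((b j : EuclideanSpace ℝ (Fin (m+1))))) with huE
  have huEorth : Orthonormal ℝ uE := by
    rw [orthonormal_iff_ite]
    intro i j
    refine Fin.cases ?_ ?_ i
    · refine Fin.cases ?_ ?_ j
      · simpa [huE] using hvv
      · intro j'
        simp only [huE, Fin.cons_zero, Fin.cons_succ]
        rw [if_neg (Fin.succ_ne_zero j').symm]
        exact hvb j'
    · intro i'
      refine Fin.cases ?_ ?_ j
      · simp only [huE, Fin.cons_zero, Fin.cons_succ]
        rw [if_neg (Fin.succ_ne_zero i')]
        rw [real_inner_comm]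
        exact hvb i'
      · intro j'
        simp only [huE, Fin.cons_succ]
        have h1 : ⟪((b i' : EuclideanSpace ℝ (Fin (m+1)))),
            ((b j' : EuclideanSpace ℝ (Fin (m+1))))⟫ = ⟪b i', b j'⟫ := rfl
        rw [h1, orthonormal_iff_ite.1 hborth i' j']
        simp [Fin.succ_inj]
  set u : Fin (m+1) → (Fin (m+1) → ℝ) := fun i => uE i with hu
  have hli : LinearIndependent ℝ u := by
    have h1 : LinearIndependent ℝ uE := huEorth.linearIndependent
    have h2 := h1.map' (WithLp.linearEquiv 2 ℝ (∀ _ : Fin (m+1), ℝ)).toLinearMap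
      (LinearEquiv.ker _)
    exact h2
  refine ⟨u, β, hli, hβmono, ?_, ?_, ?_, ?_, ?_, ⟨c, ne_of_gt hcpos, rfl⟩⟩
  · -- nonneg eigenvalues
    intro j
    have h1 := hTb j
    have h2 : ⟪((b j : EuclideanSpace ℝ (Fin (m+1)))), T ((b j : EuclideanSpace ℝ (Fin (m+1))))⟫
        = β j := by
      rw [h1, real_inner_smul_right]
      have hbb : ⟪((b j : EuclideanSpace ℝ (Fin (m+1)))),
          ((b j : EuclideanSpace ℝ (Fin (m+1))))⟫ = ⟪b j, b j⟫ := rfl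
      rw [hbb, orthonormal_iff_ite.1 hborth j j]
      simp
    rw [← h2]
    have h3 := hA.dotProduct_mulVec_nonneg ((b j : EuclideanSpace ℝ (Fin (m+1))).ofLp)
    rw [hT, Matrix.toEuclideanLin_apply]
    have h4 : ⟪((b j : EuclideanSpace ℝ (Fin (m+1)))),
        WithLp.toLp 2 (A.mulVec ((b j : EuclideanSpace ℝ (Fin (m+1))).ofLp))⟫
        = star ((b j : EuclideanSpace ℝ (Fin (m+1))).ofLp) ⬝ᵥ
          A.mulVec ((b j : EuclideanSpace ℝ (Fin (m+1))).ofLp) := by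
      rw [PiLp.inner_apply]
      simp [dotProduct, mul_comm]
    rw [h4]
    exact h3
  · -- rank bound
    intro s hs
    set R := LinearMap.range A.mulVecLin with hR
    have hmem : ∀ j : Fin m, β j ≠ 0 → (u (Fin.succ j)) ∈ R := by
      intro j hj
      refine ⟨(β j)⁻¹ • u (Fin.succ j), ?_⟩
      rw [Matrix.mulVecLin_apply, Matrix.mulVec_smul]
      have h5 : A.mulVec (u (Fin.succ j)) = β j • u (Fin.succ j) := by
        have := congrArg WithLp.ofLp (hTb j)
        rw [hTapp] at this
        exact this
      rw [h5, smul_smul, inv_mul_cancel₀ hj, one_smul]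
    set F : {x // x ∈ s} → (Fin (m+1) → ℝ) := fun j => u (Fin.succ (j : Fin m)) with hF
    have hFli : LinearIndependent ℝ F := by
      apply hli.comp
      intro x y hxy
      exact Subtype.ext (Fin.succ_injective m hxy)
    set F' : {x // x ∈ s} → R := fun j => ⟨F j, hmem j (hs j j.2)⟩ with hF'
    have hF'li : LinearIndependent ℝ F' := by
      apply LinearIndependent.of_comp R.subtype
      exact hFli
    have := hF'li.fintype_card_le_finrank
    simpa [Matrix.rank] using this
  · -- A v = 0
    have := congrArg WithLp.ofLp hTv
    rw [hTapp] at this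
    simpa [hu, huE] using this
  · -- A (b j) = β j (b j)
    intro j
    have := congrArg WithLp.ofLp (hTb j)
    rw [hTapp] at this
    simpa [hu, huE] using this
  · -- entries sum zero
    intro j
    have h1 := hvb j
    rw [hvinner] at h1
    have h2 : (∑ i, ((b j : EuclideanSpace ℝ (Fin (m+1)))) i) = 0 := by
      rcases mul_eq_zero.1 h1 with h | h
      · exact absurd h (ne_of_gt hcpos)
      · exact h
    simpa [hu, huE] using h2

end AuxLemmas

/-- Lemma `gammaMbetter2`. If A is n×n PSD with zero row sums,
rank ≤ ρ and trace ≥ T, a = T/ρ, d ≥ a, and C = d·K_n − A with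
K_n = I − (1/n)J, then the vector γ = (0, (d−a)^ρ, d^{n−1−ρ}) is weakly
majorized from above by the nondecreasing eigenvalue vector of C. -/
theorem stmt_8 (n ρ : ℕ) (hρ0 : 0 < ρ) (hρn : ρ < n)
    (A : Matrix (Fin n) (Fin n) ℝ) (hA : A.PosSemidef)
    (hrow : A.mulVec (fun _ => 1) = 0)
    (hrank : A.rank ≤ ρ) (T : ℝ) (htr : T ≤ A.trace)
    (a d : ℝ) (ha : a = T / ρ) (had : a ≤ d)
    (C : Matrix (Fin n) (Fin n) ℝ)
    (hC : C = d • ((1 : Matrix (Fin n) (Fin n) ℝ) -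
        (1 / (n : ℝ)) • Matrix.of (fun _ _ => (1 : ℝ))) - A)
    (hCh : C.IsHermitian)
    (γ : Fin n → ℝ)
    (hγ : ∀ i : Fin n, γ i = if (i : ℕ) = 0 then 0
        else if (i : ℕ) ≤ ρ then d - a else d) :
    ∀ k, k ≤ n →
      ∑ i ∈ Finset.univ.filter (fun i : Fin n => (i : ℕ) < k),
          (hCh.eigenvalues ∘ Tuple.sort hCh.eigenvalues) i ≤
        ∑ i ∈ Finset.univ.filter (fun i : Fin n => (i : ℕ) < k), γ i := by
  classical
  obtain ⟨m, rfl⟩ : ∃ m, n = m + 1 := ⟨n - 1, by omega⟩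
  have hρm : ρ ≤ m := by omega
  have hρR : (ρ : ℝ) ≠ 0 := Nat.cast_ne_zero.2 (by omega)
  have hTa : (ρ : ℝ) * a = T := by
    rw [ha]; field_simp
  obtain ⟨u, β, hli, hβmono, hβ0, hβrank, hu0, husucc, husum, c, hcne, huc⟩ :=
    aux_decomp A hA hrow
  have hβρ : ∀ s : Finset (Fin m), (∀ j ∈ s, β j ≠ 0) → s.card ≤ ρ :=
    fun s hs => le_trans (hβrank s hs) hrank
  have hzero := aux_zero hβmono hβ0 hβρ
  -- trace of A
  have hAu : ∀ j, A.mulVec (u j) = (Fin.cons 0 β : Fin (m+1) → ℝ) j • u j := by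
    intro j
    refine Fin.cases ?_ ?_ j
    · simpa using hu0
    · intro j'
      simpa using husucc j'
  have htrA : A.trace = ∑ j, β j := by
    have h := (aux_diag (Nat.succ_pos m) A u hli (Fin.cons 0 β) hAu).2
    rw [h, Fin.sum_univ_succ]
    simp
  -- action of C on the basis
  set g : Fin (m+1) → ℝ := Fin.cons 0 (fun j => d - β j) with hg
  have hJ : ∀ x : Fin (m+1) → ℝ,
      (Matrix.of (fun _ _ => (1:ℝ)) : Matrix (Fin (m+1)) (Fin (m+1)) ℝ).mulVec x
        = fun _ => ∑ i, x i := by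
    intro x
    funext r
    simp [Matrix.mulVec, dotProduct]
  have hnR : ((m+1 : ℕ) : ℝ) ≠ 0 := by positivity
  have hCu : ∀ j, C.mulVec (u j) = g j • u j := by
    intro j
    have hKx : ∀ x : Fin (m+1) → ℝ, (∑ i, x i = 0) →
        C.mulVec x = d • x - A.mulVec x := by
      intro x hx
      rw [hC, Matrix.sub_mulVec, Matrix.smul_mulVec, Matrix.sub_mulVec,
        Matrix.one_mulVec, Matrix.smul_mulVec, hJ x, hx]
      funext r
      simp
    refine Fin.cases ?_ ?_ j
    · -- j = 0
      rw [huc]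
      have hsum : (∑ _i : Fin (m+1), c) = ((m+1 : ℕ) : ℝ) * c := by
        rw [Finset.sum_const]
        simp [mul_comm]
      rw [hC, Matrix.sub_mulVec, Matrix.smul_mulVec, Matrix.sub_mulVec,
        Matrix.one_mulVec, Matrix.smul_mulVec, hJ, hsum]
      have hA0 : A.mulVec (fun _ => c) = 0 := by
        have : (fun _ : Fin (m+1) => c) = c • (fun _ : Fin (m+1) => (1:ℝ)) := by
          funext i; simp
        rw [this, Matrix.mulVec_smul, hrow, smul_zero]
      rw [hA0]
      have hgz : g 0 = 0 := by simp [hg]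
      rw [hgz]
      funext r
      push_cast
      simp only [Pi.sub_apply, Pi.smul_apply, smul_eq_mul, Pi.zero_apply, sub_zero, zero_mul]
      rw [one_div, ← mul_assoc, inv_mul_cancel₀ (by positivity : (m:ℝ) + 1 ≠ 0), one_mul,
        sub_self, mul_zero]
    · -- j = succ j'
      intro j'
      rw [hKx (u (Fin.succ j')) (husum j'), husucc j']
      have hgs : g (Fin.succ j') = d - β j' := by simp [hg]
      rw [hgs]
      funext r
      show d * u (Fin.succ j') r - β j' * u (Fin.succ j') r = (d - β j') * u (Fin.succ j') r
      ring
  have hCchar := (aux_diag (Nat.succ_pos m) C u hli g hCu).1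
  have hEchar := aux_herm (Nat.succ_pos m) hCh
  have hmult : Multiset.map hCh.eigenvalues Finset.univ.val
      = Multiset.map g Finset.univ.val := by
    rw [← aux_roots, ← aux_roots, ← hCchar, ← hEchar]
  have hsorted := aux_sorted_eq hmult
  intro k hk
  rw [show (hCh.eigenvalues ∘ Tuple.sort hCh.eigenvalues) = g ∘ Tuple.sort g from hsorted]
  rcases Nat.eq_zero_or_pos k with rfl | hkpos
  · simp
  obtain ⟨q, rfl⟩ : ∃ q, k = q + 1 := ⟨k - 1, by omega⟩
  have hqm : q ≤ m := by omega
  -- the chosen subset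
  have hjmlt : ∀ t : Fin q, m - q + t.val < m := by
    intro t
    have := t.2
    omega
  set jm : Fin q → Fin m := fun t => ⟨m - q + t.val, hjmlt t⟩ with hjm
  set ψ : Fin (q+1) → Fin (m+1) := Fin.cons 0 (fun t => Fin.succ (jm t)) with hψ
  have hψval : ∀ t : Fin (q+1), (ψ t).val = if t.val = 0 then 0 else m - q + (t.val - 1) + 1 := by
    intro t
    refine Fin.cases ?_ ?_ t
    · simp [hψ]
    · intro t'
      have h1 : (ψ (Fin.succ t')).val = m - q + t'.val + 1 := by
        simp [hψ, hjm]
      rw [h1, if_neg (by simp [Fin.val_succ])]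
      simp [Fin.val_succ]
  have hψinj : Function.Injective ψ := by
    intro x y h
    have hv := congrArg Fin.val h
    rw [hψval, hψval] at hv
    apply Fin.ext
    have hx := x.2
    have hy := y.2
    split_ifs at hv <;> omega
  set S : Finset (Fin (m+1)) := Finset.image ψ Finset.univ with hS
  have hcardS : S.card = q + 1 := by
    rw [hS, Finset.card_image_of_injective _ hψinj, Finset.card_univ, Fintype.card_fin]
  have hmain := aux_sort_min g S
  rw [hcardS] at hmain
  refine hmain.trans ?_
  -- compute the sum over S
  have hsumS : ∑ j ∈ S, g j = ∑ t : Fin q, (d - β (jm t)) := by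
    rw [hS, Finset.sum_image (fun x _ y _ h => hψinj h), Fin.sum_univ_succ]
    have h0 : g (ψ 0) = 0 := by simp [hψ, hg]
    rw [h0, zero_add]
    apply Finset.sum_congr rfl
    intro t _
    simp [hψ, hg]
  rw [hsumS]
  -- compute the γ sum
  have hγsum : ∑ i ∈ Finset.univ.filter (fun i : Fin (m+1) => (i : ℕ) < q + 1), γ i
      = ∑ j ∈ Finset.range (q+1),
          (if j = 0 then 0 else if j ≤ ρ then d - a else d) := by
    apply aux_filter_sum hk γ _ hγ
  rw [hγsum]
  set Stop : ℝ := ∑ t : Fin q, β (jm t) with hStop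
  have hsumS2 : ∑ t : Fin q, (d - β (jm t)) = q • d - Stop := by
    rw [Finset.sum_sub_distrib, Finset.sum_const, Finset.card_univ, Fintype.card_fin, hStop]
  rw [hsumS2]
  -- split the β sum
  have hsplit : ∑ j, β j
      = ∑ j ∈ Finset.univ.filter (fun j : Fin m => (j : ℕ) < m - q), β j + Stop := by
    rw [hStop]
    have himg2 : Finset.univ.filter (fun j : Fin m => ¬ ((j : ℕ) < m - q))
        = Finset.image jm Finset.univ := by
      ext i
      simp only [Finset.mem_filter, Finset.mem_univ, true_and, Finset.mem_image, not_lt]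
      constructor
      · intro hi
        refine ⟨⟨i.val - (m - q), by have := i.2; omega⟩, ?_⟩
        rw [hjm]
        apply Fin.ext
        simp only
        have := i.2
        omega
      · rintro ⟨t, rfl⟩
        rw [hjm]
        simp only
        omega
    have hjminj : Function.Injective jm := by
      intro x y h
      have := congrArg Fin.val h
      simp only [hjm] at this
      exact Fin.ext (by omega)
    rw [← Finset.sum_filter_add_sum_filter_not Finset.univ (fun j : Fin m => (j : ℕ) < m - q),
      himg2, Finset.sum_image (fun x _ y _ h => hjminj h)]
  rcases le_or_gt q ρ with hqρ | hqρ
  · -- case q ≤ ρ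
    have hγval : ∑ j ∈ Finset.range (q+1),
        (if j = 0 then 0 else if j ≤ ρ then d - a else d) = q * (d - a) := by
      have : ∀ j ∈ Finset.range (q+1),
          (if j = 0 then 0 else if j ≤ ρ then d - a else d)
            = (d - a) - (if j = 0 then d - a else 0) := by
        intro j hj
        rw [Finset.mem_range] at hj
        rcases Nat.eq_zero_or_pos j with rfl | hjpos
        · simp
        · rw [if_neg (by omega : j ≠ 0), if_neg (by omega : j ≠ 0),
            if_pos (by omega), sub_zero]
      rw [Finset.sum_congr rfl this, Finset.sum_sub_distrib, Finset.sum_const,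
        Finset.card_range, Finset.sum_ite_eq' (Finset.range (q+1)) 0 (fun _ => d - a)]
      rw [if_pos (Finset.mem_range.2 (Nat.succ_pos q))]
      push_cast
      ring
    rw [hγval]
    -- need : q • d - Stop ≤ q * (d - a), i.e. q * a ≤ Stop
    have hkey : (q : ℝ) * a ≤ Stop := by
      rcases Nat.eq_zero_or_pos q with rfl | hqpos
      · simp [hStop]
      · set βq : ℝ := β ⟨m - q, by omega⟩ with hβq
        have h1 : (q : ℝ) * βq ≤ Stop := by
          rw [hStop]
          calc (q : ℝ) * βq = ∑ _t : Fin q, βq := by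
                rw [Finset.sum_const, Finset.card_univ, Fintype.card_fin]
                simp [mul_comm]
            _ ≤ ∑ t : Fin q, β (jm t) := by
                apply Finset.sum_le_sum
                intro t _
                apply hβmono
                rw [Fin.le_def, hjm]
                simp
          
        have h2 : ∑ j ∈ Finset.univ.filter (fun j : Fin m => (j : ℕ) < m - q), β j
            ≤ (ρ - q : ℝ) * βq := by
          have hcount : (Finset.univ.filter (fun j : Fin m =>
              (j : ℕ) < m - q ∧ ¬ ((j : ℕ) < m - ρ))).card ≤ ρ - q := by
            have hsub : (Finset.univ.filter (fun j : Fin m =>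
                (j : ℕ) < m - q ∧ ¬ ((j : ℕ) < m - ρ))).card
                ≤ ((Finset.Ico (m - ρ) (m - q)).card) := by
              refine Finset.card_le_card_of_injOn (fun j => (j : ℕ)) ?_ ?_
              · intro j hj
                simp only [Finset.mem_coe, Finset.mem_filter, Finset.mem_univ, true_and] at hj
                simp only [Finset.mem_coe, Finset.mem_Ico]
                omega
              · intro x _ y _ h
                exact Fin.ext h
            rw [Nat.card_Ico] at hsub
            omega
          calc ∑ j ∈ Finset.univ.filter (fun j : Fin m => (j : ℕ) < m - q), β j
              = ∑ j ∈ Finset.univ.filter (fun j : Fin m =>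
                  (j : ℕ) < m - q ∧ ¬ ((j : ℕ) < m - ρ)), β j := by
                rw [← Finset.sum_filter_add_sum_filter_not
                  (Finset.univ.filter (fun j : Fin m => (j : ℕ) < m - q))
                  (fun j => (j : ℕ) < m - ρ), Finset.filter_filter, Finset.filter_filter]
                have hz : ∑ j ∈ Finset.univ.filter (fun j : Fin m =>
                    (j : ℕ) < m - q ∧ (j : ℕ) < m - ρ), β j = 0 := by
                  apply Finset.sum_eq_zero
                  intro j hj
                  simp only [Finset.mem_filter, Finset.mem_univ, true_and] at hj
                  exact hzero j hj.2
                rw [hz, zero_add]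
            _ ≤ ∑ _j ∈ Finset.univ.filter (fun j : Fin m =>
                  (j : ℕ) < m - q ∧ ¬ ((j : ℕ) < m - ρ)), βq := by
                apply Finset.sum_le_sum
                intro j hj
                simp only [Finset.mem_filter, Finset.mem_univ, true_and] at hj
                apply hβmono
                rw [Fin.le_def]
                simp only [Fin.val_mk]
                omega
            _ = (Finset.univ.filter (fun j : Fin m =>
                  (j : ℕ) < m - q ∧ ¬ ((j : ℕ) < m - ρ))).card * βq := by
                rw [Finset.sum_const]
                simp [mul_comm]
            _ ≤ (ρ - q : ℝ) * βq := by
                apply mul_le_mul_of_nonneg_right _ (hβ0 _)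
                have : ((ρ : ℝ) - q) = ((ρ - q : ℕ) : ℝ) := by
                  push_cast [Nat.cast_sub hqρ]
                  ring
                rw [this]
                exact_mod_cast hcount
        -- ρ * Stop ≥ q * trace ≥ q * T = q * ρ * a
        have h3 : (q : ℝ) * A.trace ≤ (ρ : ℝ) * Stop := by
          rw [htrA, hsplit]
          have h4 : (q : ℝ) * (∑ j ∈ Finset.univ.filter
              (fun j : Fin m => (j : ℕ) < m - q), β j + Stop)
              ≤ (q : ℝ) * ((ρ - q : ℝ) * βq + Stop) := by
            apply mul_le_mul_of_nonneg_left _ (by positivity)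
            linarith [h2]
          refine h4.trans ?_
          have h5 : (q : ℝ) * ((ρ - q) * βq) ≤ ((ρ : ℝ) - q) * Stop := by
            have h6 : (q : ℝ) * ((ρ - q) * βq) = ((ρ : ℝ) - q) * ((q : ℝ) * βq) := by ring
            rw [h6]
            apply mul_le_mul_of_nonneg_left h1
            have : (q : ℝ) ≤ (ρ : ℝ) := by exact_mod_cast hqρ
            linarith
          nlinarith [h5]
        have h7 : (q : ℝ) * T ≤ (q : ℝ) * A.trace := by
          apply mul_le_mul_of_nonneg_left htr (by positivity)
        have h8 : (q : ℝ) * ((ρ : ℝ) * a) ≤ (ρ : ℝ) * Stop := by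
          rw [hTa]
          linarith
        have hρpos : (0 : ℝ) < ρ := by exact_mod_cast hρ0
        nlinarith [h8]
    rw [nsmul_eq_mul]
    linarith [hkey]
  · -- case q > ρ
    have hγval : ∑ j ∈ Finset.range (q+1),
        (if j = 0 then 0 else if j ≤ ρ then d - a else d)
          = (q+1) * d - (d + ρ * a) := by
      have hstep : ∀ j ∈ Finset.range (q+1),
          (if j = 0 then 0 else if j ≤ ρ then d - a else d)
            = d - (if j = 0 then d else if j ≤ ρ then a else 0) := by
        intro j hj
        rcases Nat.eq_zero_or_pos j with rfl | hjpos
        · simp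
        · rw [if_neg (by omega : j ≠ 0), if_neg (by omega : j ≠ 0)]
          by_cases hjρ : j ≤ ρ
          · rw [if_pos hjρ, if_pos hjρ]
          · rw [if_neg hjρ, if_neg hjρ, sub_zero]
      rw [Finset.sum_congr rfl hstep, Finset.sum_sub_distrib, Finset.sum_const,
        Finset.card_range]
      have hsub : ∑ j ∈ Finset.range (q+1), (if j = 0 then d else if j ≤ ρ then a else 0)
          = d + ρ * a := by
        rw [← Finset.sum_subset (Finset.range_subset_range.2 (by omega) :
            Finset.range (ρ+1) ⊆ Finset.range (q+1))]
        · have hstep2 : ∀ j ∈ Finset.range (ρ+1),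
              (if j = 0 then d else if j ≤ ρ then a else 0)
                = a + (if j = 0 then d - a else 0) := by
            intro j hj
            rw [Finset.mem_range] at hj
            rcases Nat.eq_zero_or_pos j with rfl | hjpos
            · simp
            · rw [if_neg (by omega : j ≠ 0), if_neg (by omega : j ≠ 0),
                if_pos (by omega), add_zero]
          rw [Finset.sum_congr rfl hstep2, Finset.sum_add_distrib, Finset.sum_const,
            Finset.card_range,
            Finset.sum_ite_eq' (Finset.range (ρ+1)) 0 (fun _ => d - a)]
          rw [if_pos (Finset.mem_range.2 (Nat.succ_pos ρ))]
          push_cast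
          ring
        · intro x hx hx2
          rw [Finset.mem_range] at hx
          rw [Finset.mem_range, not_lt] at hx2
          rw [if_neg (by omega), if_neg (by omega)]
      rw [hsub]
      push_cast
      ring
    rw [hγval]
    -- Stop = trace A ≥ T = ρ a
    have hlow : ∑ j ∈ Finset.univ.filter (fun j : Fin m => (j : ℕ) < m - q), β j = 0 := by
      apply Finset.sum_eq_zero
      intro j hj
      simp only [Finset.mem_filter, Finset.mem_univ, true_and] at hj
      exact hzero j (by omega)
    have hStr : Stop = A.trace := by
      rw [htrA, hsplit, hlow, zero_add]
    have hTS : (ρ : ℝ) * a ≤ Stop := by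
      rw [hStr, hTa]
      exact htr
    rw [nsmul_eq_mul]
    push_cast
    linarith [hTS]
end

section
/- Let s ≡ 3 (mod 4) be a prime power and F the field of order s. Let C_0 be the set of nonzero squares and C_1 the set of nonzero non-squares of F. Define W = {x ∈ C_0 : 1 − x² ∈ C_0}. Then |W| = (s−3)/4. -/
open Finset

section Aux
variable {F : Type*} [Field F] [Fintype F] [DecidableEq F]

-- basic consequences
lemma aux_char (h4 : Fintype.card F % 4 = 3) : ringChar F ≠ 2 := by
  intro h
  have := FiniteField.even_card_of_char_two (F := F) h
  omega

lemma aux_two (h4 : Fintype.card F % 4 = 3) : (2 : F) ≠ 0 :=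
  Ring.two_ne_zero (aux_char h4)

lemma aux_m1 (h4 : Fintype.card F % 4 = 3) : ¬ IsSquare (-1 : F) := by
  rw [FiniteField.isSquare_neg_one_iff]
  omega

lemma aux_d (h4 : Fintype.card F % 4 = 3) (t : F) : 1 + t ^ 2 ≠ 0 := by
  intro h
  exact aux_m1 h4 ⟨t, by linear_combination -h⟩

lemma aux_sq_or (h4 : Fintype.card F % 4 = 3) {a : F} (ha : a ≠ 0) :
    IsSquare a ∨ IsSquare (-a) := by
  by_contra h
  push_neg at h
  obtain ⟨h1, h2⟩ := h
  rw [← quadraticChar_neg_one_iff_not_isSquare] at h1 h2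
  have : quadraticChar F (-a) = quadraticChar F (-1) * quadraticChar F a := by
    rw [← map_mul]; ring_nf
  rw [quadraticChar_neg_one (aux_char h4), ZMod.χ₄_nat_three_mod_four h4, h1, h2] at this
  norm_num at this

lemma aux_not_both (h4 : Fintype.card F % 4 = 3) {a b : F} (hb : b ≠ 0)
    (h1 : IsSquare a) (h2 : IsSquare b) (hab : a = -b) : False := by
  obtain ⟨r, hr⟩ := h1
  obtain ⟨s, hs⟩ := h2
  have hs0 : s ≠ 0 := by rintro rfl; simp at hs; exact hb hs
  exact aux_m1 h4 ⟨r / s, by field_simp; linear_combination hr + hs - hab⟩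

end Aux

section Circle
variable {F : Type*} [Field F] [Fintype F] [DecidableEq F]

lemma aux_circle (h4 : Fintype.card F % 4 = 3) :
    (univ.filter (fun p : F × F => p.1 ^ 2 + p.2 ^ 2 = 1)).card = Fintype.card F + 1 := by
  have h2 := aux_two h4
  have hd := aux_d h4
  have key : (univ : Finset (Option F)).card
      = (univ.filter (fun p : F × F => p.1 ^ 2 + p.2 ^ 2 = 1)).card := by
    refine card_nbij'
      (fun t => match t with
        | none => (-1, 0)
        | some t => ((1 - t ^ 2) / (1 + t ^ 2), 2 * t / (1 + t ^ 2)))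
      (fun p => if p.1 = -1 then none else some (p.2 / (1 + p.1))) ?_ ?_ ?_ ?_
    · rintro (_ | t) -
      · simp [mem_filter]
      · have ht := hd t
        simp only [mem_coe, mem_filter, mem_univ, true_and]
        field_simp
        ring
    · intro p hp
      simp
    · rintro (_ | t) -
      · simp
      · have ht := hd t
        have h2t : (1 + t ^ 2) * 2 ≠ 0 := mul_ne_zero ht h2
        have hne : (1 - t ^ 2) / (1 + t ^ 2) ≠ -1 := by
          intro h
          field_simp at h
          exact h2 (by linear_combination h)
        simp only [hne, if_false, Option.some.injEq]
        have h1x : 1 + (1 - t ^ 2) / (1 + t ^ 2) = 2 / (1 + t ^ 2) := by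
          field_simp; ring
        rw [h1x, div_eq_iff (div_ne_zero h2 ht)]
        field_simp
    · intro p hp
      simp only [mem_coe, mem_filter, mem_univ, true_and] at hp
      by_cases hx : p.1 = -1
      · have : p.2 ^ 2 = 0 := by linear_combination hp - (p.1 - 1) * hx
        have hy : p.2 = 0 := pow_eq_zero_iff (n := 2) (by norm_num) |>.mp this
        simp only [hx, if_true]
        exact Prod.ext (by simp [hx]) (by simp [hy])
      · simp only [hx, if_false]
        have h1x : 1 + p.1 ≠ 0 := fun h => hx (by linear_combination h)
        have hdd : 1 + (p.2 / (1 + p.1)) ^ 2 = 2 / (1 + p.1) := by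
          field_simp
          linear_combination hp
        refine Prod.ext ?_ ?_
        · show (1 - (p.2 / (1 + p.1)) ^ 2) / (1 + (p.2 / (1 + p.1)) ^ 2) = p.1
          rw [hdd, div_eq_iff (div_ne_zero h2 h1x)]
          field_simp
          linear_combination -hp
        · show 2 * (p.2 / (1 + p.1)) / (1 + (p.2 / (1 + p.1)) ^ 2) = p.2
          rw [hdd, div_eq_iff (div_ne_zero h2 h1x)]
          field_simp
  rw [← key]
  simp

end Circle

/-- Let F be a finite field with card F ≡ 3 (mod 4), C₀ the set of
nonzero squares. Then W = {x ∈ C₀ : 1 − x² ∈ C₀} has cardinality (card F − 3)/4. -/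
theorem stmt_11 (F : Type*) [Field F] [Fintype F]
    (h4 : Fintype.card F % 4 = 3) :
    {x : F | (x ≠ 0 ∧ IsSquare x) ∧ (1 - x ^ 2 ≠ 0 ∧ IsSquare (1 - x ^ 2))}.ncard =
      (Fintype.card F - 3) / 4 := by
  classical
  have h2 := aux_two h4
  have h1n : (1 : F) ≠ -1 := fun h => h2 (by linear_combination h)
  set S : Finset (F × F) := univ.filter (fun p : F × F => p.1 ^ 2 + p.2 ^ 2 = 1) with hS
  set U : Finset F :=
    univ.filter (fun u : F => u ≠ 0 ∧ IsSquare u ∧ 1 - u ≠ 0 ∧ IsSquare (1 - u)) with hU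
  set Wf : Finset F := univ.filter
    (fun x : F => (x ≠ 0 ∧ IsSquare x) ∧ (1 - x ^ 2 ≠ 0 ∧ IsSquare (1 - x ^ 2))) with hW
  -- step 1 : the set in the statement is ↑Wf
  have hset : {x : F | (x ≠ 0 ∧ IsSquare x) ∧ (1 - x ^ 2 ≠ 0 ∧ IsSquare (1 - x ^ 2))}
      = (Wf : Set F) := by
    ext x; simp [hW]
  rw [hset, Set.ncard_coe_finset]
  -- step 2 : split the circle
  have hsplit : (S.filter (fun p => p.1 = 0 ∨ p.2 = 0)).card
      + (S.filter (fun p => ¬(p.1 = 0 ∨ p.2 = 0))).card = S.card :=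
    Finset.card_filter_add_card_filter_not _
  -- step 3 : the axis points
  have haxis : S.filter (fun p => p.1 = 0 ∨ p.2 = 0)
      = ({(1, 0), (-1, 0), (0, 1), (0, -1)} : Finset (F × F)) := by
    ext p
    simp only [mem_filter, mem_univ, true_and, mem_insert, mem_singleton, hS, Prod.ext_iff]
    constructor
    · rintro ⟨hp, h | h⟩
      · have : (p.2 - 1) * (p.2 + 1) = 0 := by
          linear_combination hp - (p.1 + 0) * h
        rcases mul_eq_zero.mp this with h' | h'
        · exact Or.inr (Or.inr (Or.inl ⟨h, by linear_combination h'⟩))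
        · exact Or.inr (Or.inr (Or.inr ⟨h, by linear_combination h'⟩))
      · have : (p.1 - 1) * (p.1 + 1) = 0 := by
          linear_combination hp - (p.2 + 0) * h
        rcases mul_eq_zero.mp this with h' | h'
        · exact Or.inl ⟨by linear_combination h', h⟩
        · exact Or.inr (Or.inl ⟨by linear_combination h', h⟩)
    · rintro (⟨h1, h2'⟩ | ⟨h1, h2'⟩ | ⟨h1, h2'⟩ | ⟨h1, h2'⟩) <;>
        rw [h1, h2'] <;> norm_num
  have hcard4 : ({(1, 0), (-1, 0), (0, 1), (0, -1)} : Finset (F × F)).card = 4 := by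
    rw [card_insert_of_notMem (by simp [Prod.ext_iff, h1n, Ne.symm h1n]),
      card_insert_of_notMem (by simp [Prod.ext_iff, h1n, Ne.symm h1n]),
      card_insert_of_notMem (by simp [Prod.ext_iff, h1n, Ne.symm h1n]), card_singleton]
  -- step 4 : the off-axis points, fibered over p.1 ^ 2
  have hfib : (S.filter (fun p => ¬(p.1 = 0 ∨ p.2 = 0))).card = U.card * 4 := by
    rw [Finset.card_eq_sum_card_fiberwise (f := fun p : F × F => p.1 ^ 2) (t := U) ?_]
    · rw [Finset.sum_congr rfl ?_, Finset.sum_const, smul_eq_mul]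
      intro u hu
      simp only [hU, mem_filter, mem_univ, true_and] at hu
      obtain ⟨hu0, ⟨r, hr⟩, hu1, ⟨z, hz⟩⟩ := hu
      have hr0 : r ≠ 0 := by rintro rfl; rw [mul_zero] at hr; exact hu0 hr
      have hz0 : z ≠ 0 := by rintro rfl; rw [mul_zero] at hz; exact hu1 hz
      have hrr : r ≠ -r := fun h => hr0 (by
        have : (2 : F) * r = 0 := by linear_combination h
        rcases mul_eq_zero.mp this with h' | h'
        · exact absurd h' h2
        · exact h')
      have hzz : z ≠ -z := fun h => hz0 (by
        have : (2 : F) * z = 0 := by linear_combination h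
        rcases mul_eq_zero.mp this with h' | h'
        · exact absurd h' h2
        · exact h')
      have hfeq : (S.filter (fun p => ¬(p.1 = 0 ∨ p.2 = 0))).filter
            (fun p => p.1 ^ 2 = u)
          = ({(r, z), (r, -z), (-r, z), (-r, -z)} : Finset (F × F)) := by
        ext p
        simp only [mem_filter, mem_univ, true_and, mem_insert, mem_singleton, hS,
          Prod.ext_iff, not_or]
        constructor
        · rintro ⟨⟨hcirc, hp1, hp2⟩, hsq⟩
          have h1 : (p.1 - r) * (p.1 + r) = 0 := by linear_combination hsq + hr
          have h2' : (p.2 - z) * (p.2 + z) = 0 := by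
            linear_combination hcirc - hsq + hz
          rcases mul_eq_zero.mp h1 with ha | ha <;> rcases mul_eq_zero.mp h2' with hb | hb
          · exact Or.inl ⟨by linear_combination ha, by linear_combination hb⟩
          · exact Or.inr (Or.inl ⟨by linear_combination ha, by linear_combination hb⟩)
          · exact Or.inr (Or.inr (Or.inl ⟨by linear_combination ha, by linear_combination hb⟩))
          · exact Or.inr (Or.inr (Or.inr ⟨by linear_combination ha, by linear_combination hb⟩))
        · rintro (⟨ha, hb⟩ | ⟨ha, hb⟩ | ⟨ha, hb⟩ | ⟨ha, hb⟩) <;>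
            rw [ha, hb] <;>
            exact ⟨⟨by linear_combination -hr - hz, by simpa using hr0, by simpa using hz0⟩,
              by linear_combination -hr⟩
      rw [hfeq]
      rw [card_insert_of_notMem (by simp [Prod.ext_iff, hrr, hzz, Ne.symm hrr, Ne.symm hzz]),
        card_insert_of_notMem (by simp [Prod.ext_iff, hrr, hzz, Ne.symm hrr, Ne.symm hzz]),
        card_insert_of_notMem (by simp [Prod.ext_iff, hrr, hzz, Ne.symm hrr, Ne.symm hzz]),
        card_singleton]
    · intro p hp
      simp only [mem_coe, mem_filter, mem_univ, true_and, not_or, hS] at hp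
      obtain ⟨hcirc, hp1, hp2⟩ := hp
      simp only [hU, mem_coe, mem_filter, mem_univ, true_and]
      refine ⟨pow_ne_zero 2 hp1, ⟨p.1, pow_two p.1⟩, ?_, ⟨p.2, ?_⟩⟩
      · intro h
        exact pow_ne_zero 2 hp2 (by linear_combination hcirc + h)
      · linear_combination -hcirc
  -- step 5 : |Wf| = |U| via x ↦ x ^ 2
  have hWU : Wf.card = U.card := by
    refine Finset.card_bij (fun x _ => x ^ 2) ?_ ?_ ?_
    · intro x hx
      simp only [hW, mem_filter, mem_univ, true_and] at hx
      obtain ⟨⟨hx0, hxs⟩, h1, hs1⟩ := hx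
      simp only [hU, mem_filter, mem_univ, true_and]
      exact ⟨pow_ne_zero 2 hx0, ⟨x, pow_two x⟩, h1, hs1⟩
    · intro x1 hx1 x2 hx2 heq
      simp only [hW, mem_filter, mem_univ, true_and] at hx1 hx2
      have h1 : (x1 - x2) * (x1 + x2) = 0 := by linear_combination heq
      rcases mul_eq_zero.mp h1 with h | h
      · linear_combination h
      · exact (aux_not_both h4 hx2.1.1 hx1.1.2 hx2.1.2 (by linear_combination h)).elim
    · intro u hu
      simp only [hU, mem_filter, mem_univ, true_and] at hu
      obtain ⟨hu0, ⟨r, hr⟩, hu1, hs1⟩ := hu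
      have hr0 : r ≠ 0 := by rintro rfl; rw [mul_zero] at hr; exact hu0 hr
      have hru : r ^ 2 = u := by linear_combination -hr
      rcases aux_sq_or h4 hr0 with hsq | hsq
      · refine ⟨r, ?_, hru⟩
        simp only [hW, mem_filter, mem_univ, true_and]
        exact ⟨⟨hr0, hsq⟩, by rw [hru]; exact hu1, by rw [hru]; exact hs1⟩
      · refine ⟨-r, ?_, by linear_combination hru⟩
        simp only [hW, mem_filter, mem_univ, true_and]
        refine ⟨⟨neg_ne_zero.mpr hr0, hsq⟩, ?_, ?_⟩
        · rw [show (-r) ^ 2 = u by linear_combination hru]; exact hu1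
        · rw [show (-r) ^ 2 = u by linear_combination hru]; exact hs1
  -- step 6 : put everything together
  have hcirc := aux_circle h4
  rw [← hS] at hcirc
  rw [haxis, hcard4, hfib, ← hWU] at hsplit
  have hge : 3 ≤ Fintype.card F := by
    have := Fintype.card_pos (α := F)
    omega
  omega
end

section
/- Let s ≡ 3 (mod 4) be a prime power, F the field of order s, C_0 the nonzero squares and C_1 the nonzero non-squares. Let W = {x ∈ C_0 : 1−x² ∈ C_0} and define f : W → C_1 by f(x) = −1/x. Then: (a) f maps W bijectively onto {x ∈ C_1 : 1−x² ∈ C_1}; (b) for every ξ ∈ W, (ξ − 1)(f(ξ) − 1) ∈ C_0; (c) for all ξ ≠ ξ′ in W, (ξ − ξ′)(f(ξ) − f(ξ′)) ∈ C_0. -/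
open Classical in
lemma mul_square_iff {F : Type*} [Field F] [Fintype F] {a b : F}
    (ha : a ≠ 0) (hb : b ≠ 0) : IsSquare (a * b) ↔ (IsSquare a ↔ IsSquare b) := by
  have hab : a * b ≠ 0 := mul_ne_zero ha hb
  rw [← quadraticChar_one_iff_isSquare hab, ← quadraticChar_one_iff_isSquare ha,
    ← quadraticChar_one_iff_isSquare hb, map_mul]
  rcases quadraticChar_dichotomy ha with h1 | h1 <;>
    rcases quadraticChar_dichotomy hb with h2 | h2 <;>
      simp [h1, h2]

/-- Lemma `factorsInW`. Let F be a finite field with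
card F ≡ 3 (mod 4), C₀ the nonzero squares, C₁ the nonzero non-squares,
W = {x ∈ C₀ : 1 − x² ∈ C₀}, W̃ = {x ∈ C₁ : 1 − x² ∈ C₁} and f(x) = −x⁻¹. Then
(a) f maps W bijectively onto W̃ (a subset of C₁);
(b) for every ξ ∈ W, (ξ−1)(f(ξ)−1) ∈ C₀;
(c) for ξ ≠ ξ′ in W, (ξ−ξ′)(f(ξ)−f(ξ′)) ∈ C₀. -/
theorem stmt_12 (F : Type*) [Field F] [Fintype F]
    (h4 : Fintype.card F % 4 = 3)
    (C0 C1 W Wt : Set F) (f : F → F)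
    (hC0 : C0 = {x : F | x ≠ 0 ∧ IsSquare x})
    (hC1 : C1 = {x : F | x ≠ 0 ∧ ¬ IsSquare x})
    (hW : W = {x ∈ C0 | 1 - x ^ 2 ∈ C0})
    (hWt : Wt = {x ∈ C1 | 1 - x ^ 2 ∈ C1})
    (hf : ∀ x, f x = -x⁻¹) :
    (Set.BijOn f W Wt ∧ Wt ⊆ C1) ∧
      (∀ ξ ∈ W, (ξ - 1) * (f ξ - 1) ∈ C0) ∧
      (∀ ξ ∈ W, ∀ ξ' ∈ W, ξ ≠ ξ' → (ξ - ξ') * (f ξ - f ξ') ∈ C0) := by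
  subst hC0 hC1 hW hWt
  have hneg1 : ¬ IsSquare (-1 : F) := by
    rw [FiniteField.isSquare_neg_one_iff]; simp [h4]
  -- negation flips squareness
  have hneg : ∀ {a : F}, a ≠ 0 → (IsSquare (-a) ↔ ¬ IsSquare a) := by
    intro a ha
    have := mul_square_iff (a := (-1 : F)) (b := a) (by norm_num) ha
    rw [neg_one_mul] at this
    rw [this]
    tauto
  -- maps to
  have hmaps : ∀ x : F, (x ≠ 0 ∧ IsSquare x) ∧ (1 - x ^ 2 ≠ 0 ∧ IsSquare (1 - x ^ 2)) →
      (f x ≠ 0 ∧ ¬ IsSquare (f x)) ∧ (1 - (f x) ^ 2 ≠ 0 ∧ ¬ IsSquare (1 - (f x) ^ 2)) := by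
    rintro x ⟨⟨hx0, hxs⟩, hs0, hss⟩
    have hinv : (x⁻¹ : F) ≠ 0 := inv_ne_zero hx0
    have hfx : f x ≠ 0 := by rw [hf]; simpa using hinv
    have hinvs : IsSquare (x⁻¹ : F) := hxs.inv
    constructor
    · refine ⟨hfx, ?_⟩
      rw [hf]
      rw [hneg hinv]
      simpa using hinvs
    · have key : 1 - (f x) ^ 2 = -(1 - x ^ 2) * (x⁻¹) ^ 2 := by
        rw [hf]; field_simp; ring
      constructor
      · rw [key]
        exact mul_ne_zero (neg_ne_zero.mpr hs0) (pow_ne_zero _ hinv)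
      · rw [key, mul_square_iff (neg_ne_zero.mpr hs0) (pow_ne_zero _ hinv),
          hneg hs0]
        simp [hss, IsSquare.sq]
  refine ⟨⟨⟨?_, ?_, ?_⟩, ?_⟩, ?_, ?_⟩
  · -- MapsTo
    rintro x ⟨⟨hx0, hxs⟩, hs0, hss⟩
    exact hmaps x ⟨⟨hx0, hxs⟩, hs0, hss⟩
  · -- InjOn
    rintro x ⟨⟨hx0, _⟩, _⟩ y ⟨⟨hy0, _⟩, _⟩ hxy
    rw [hf, hf] at hxy
    have := neg_injective hxy
    exact inv_injective this
  · -- SurjOn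
    rintro y ⟨⟨hy0, hys⟩, hs0, hss⟩
    refine ⟨-y⁻¹, ?_, ?_⟩
    · have hinv : (y⁻¹ : F) ≠ 0 := inv_ne_zero hy0
      have h1 : (-y⁻¹ : F) ≠ 0 := neg_ne_zero.mpr hinv
      have h2 : IsSquare (-y⁻¹ : F) := by
        rw [hneg hinv]
        intro h
        exact hys (by simpa using h.inv)
      refine ⟨⟨h1, h2⟩, ?_, ?_⟩
      · have key : 1 - (-y⁻¹ : F) ^ 2 = -(1 - y ^ 2) * (y⁻¹) ^ 2 := by
          field_simp; ring
        rw [key]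
        exact mul_ne_zero (neg_ne_zero.mpr hs0) (pow_ne_zero _ hinv)
      · have key : 1 - (-y⁻¹ : F) ^ 2 = -(1 - y ^ 2) * (y⁻¹) ^ 2 := by
          field_simp; ring
        rw [key, mul_square_iff (neg_ne_zero.mpr hs0) (pow_ne_zero _ hinv),
          hneg hs0]
        simp [hss, IsSquare.sq]
    · rw [hf, inv_neg, inv_inv, neg_neg]
  · -- Wt ⊆ C1
    rintro x ⟨h1, _⟩; exact h1
  · -- (b)
    rintro ξ ⟨⟨hx0, hxs⟩, hs0, hss⟩
    have key : (ξ - 1) * (f ξ - 1) = (1 - ξ ^ 2) * ξ⁻¹ := by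
      rw [hf]; field_simp; ring
    rw [key]
    refine ⟨mul_ne_zero hs0 (inv_ne_zero hx0), ?_⟩
    exact hss.mul hxs.inv
  · -- (c)
    rintro ξ ⟨⟨hx0, hxs⟩, _⟩ ξ' ⟨⟨hx0', hxs'⟩, _⟩ hne
    have key : (ξ - ξ') * (f ξ - f ξ') = (ξ - ξ') ^ 2 * (ξ * ξ')⁻¹ := by
      rw [hf, hf]; field_simp; ring
    rw [key]
    refine ⟨mul_ne_zero (pow_ne_zero _ (sub_ne_zero.mpr hne))
      (inv_ne_zero (mul_ne_zero hx0 hx0')), ?_⟩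
    exact (IsSquare.sq _).mul (hxs.mul hxs').inv
end

section
/- Let s ≡ 3 (mod 4) be a prime power, with W and W̃ = {x ∈ C_1 : 1−x² ∈ C_1} as above. Then the map x ↦ −x is a bijection from W = {x ∈ C_0 : 1−x² ∈ C_0} onto (C_1 \ W̃) \ {−1}, and consequently |W| + |W̃| = (s−3)/2. -/
/-- Let F be a finite field with card F ≡ 3 (mod 4), C₀ the
nonzero squares, C₁ the nonzero non-squares, W = {x ∈ C₀ : 1−x² ∈ C₀} and
W̃ = {x ∈ C₁ : 1−x² ∈ C₁}. Then x ↦ −x is a bijection from W onto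
(C₁ \ W̃) \ {−1}, and |W| + |W̃| = (card F − 3)/2. -/
theorem stmt_13 (F : Type*) [Field F] [Fintype F]
    (h4 : Fintype.card F % 4 = 3)
    (C0 C1 W Wt : Set F)
    (hC0 : C0 = {x : F | x ≠ 0 ∧ IsSquare x})
    (hC1 : C1 = {x : F | x ≠ 0 ∧ ¬ IsSquare x})
    (hW : W = {x ∈ C0 | 1 - x ^ 2 ∈ C0})
    (hWt : Wt = {x ∈ C1 | 1 - x ^ 2 ∈ C1}) :
    Set.BijOn (fun x => -x) W ((C1 \ Wt) \ {-1}) ∧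
      W.ncard + Wt.ncard = (Fintype.card F - 3) / 2 := by
  classical
  have hm1 : ¬ IsSquare (-1 : F) := by
    rw [FiniteField.isSquare_neg_one_iff]
    simp [h4]
  have hchi1 : quadraticChar F (-1) = -1 :=
    quadraticChar_neg_one_iff_not_isSquare.mpr hm1
  -- key lemma: for x ≠ 0, -x is a square iff x is not
  have key : ∀ x : F, x ≠ 0 → (IsSquare (-x) ↔ ¬ IsSquare x) := by
    intro x hx
    have hxm : -x ≠ 0 := neg_ne_zero.mpr hx
    have hmul : quadraticChar F (-x) = - quadraticChar F x := by
      rw [show (-x : F) = (-1) * x by ring, map_mul, hchi1]; ring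
    rw [← quadraticChar_one_iff_isSquare hxm, ← quadraticChar_neg_one_iff_not_isSquare,
      hmul, neg_eq_iff_eq_neg]
  have hone : (1 : F) ∈ C0 := by rw [hC0]; exact ⟨one_ne_zero, IsSquare.one⟩
  have hm1mem : (-1 : F) ∈ C1 := by
    rw [hC1]; exact ⟨neg_ne_zero.mpr one_ne_zero, hm1⟩
  have hm1notWt : (-1 : F) ∉ Wt := by
    rw [hWt, hC1]
    rintro ⟨-, h0, -⟩
    exact h0 (by ring)
  -- the bijection
  have hbij : Set.BijOn (fun x => -x) W ((C1 \ Wt) \ {-1}) := by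
    refine ⟨?_, fun a _ b _ hab => by simpa using hab, ?_⟩
    · intro x hx
      rw [hW] at hx
      obtain ⟨hxC0, hx2C0⟩ := hx
      rw [hC0] at hxC0 hx2C0
      obtain ⟨hx0, hxsq⟩ := hxC0
      have hmx : -x ≠ 0 := neg_ne_zero.mpr hx0
      have hmxns : ¬ IsSquare (-x) := by
        rw [key x hx0]; exact not_not_intro hxsq
      refine ⟨⟨?_, ?_⟩, ?_⟩
      · rw [hC1]; exact ⟨hmx, hmxns⟩
      · rw [hWt, hC1]
        rintro ⟨-, h20, h2ns⟩
        exact h2ns (by simpa using hx2C0.2)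
      · simp only [Set.mem_singleton_iff, neg_inj]
        rintro rfl
        exact hx2C0.1 (by ring)
    · rintro y ⟨⟨hyC1, hynWt⟩, hym1⟩
      have hyC1' := hyC1
      rw [hC1] at hyC1'
      obtain ⟨hy0, hyns⟩ := hyC1'
      refine ⟨-y, ?_, by simp⟩
      rw [hW, hC0]
      have hysq : IsSquare (-y) := (key y hy0).mpr hyns
      have hy1 : y ≠ 1 := fun h => hyns (h ▸ IsSquare.one)
      have hym1' : y ≠ -1 := by simpa using hym1
      have h20 : 1 - y ^ 2 ≠ 0 := by
        intro h
        have : (1 - y) * (1 + y) = 0 := by linear_combination h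
        rcases mul_eq_zero.mp this with h' | h'
        · exact hy1 (by linear_combination -h')
        · exact hym1' (by linear_combination h')
      have h2sq : IsSquare (1 - y ^ 2) := by
        by_contra hns
        exact hynWt (by rw [hWt]; exact ⟨hyC1, by rw [hC1]; exact ⟨h20, hns⟩⟩)
      refine ⟨⟨neg_ne_zero.mpr hy0, hysq⟩, ?_⟩
      simpa using ⟨h20, h2sq⟩
  refine ⟨hbij, ?_⟩
  -- cardinalities
  have hWcard : W.ncard = ((C1 \ Wt) \ {-1}).ncard := by
    rw [← hbij.image_eq, Set.ncard_image_of_injOn hbij.injOn]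
  have hWtsub : Wt ⊆ C1 := by rw [hWt]; exact fun x hx => hx.1
  have hssub : Wt ⊂ C1 := Set.ssubset_def.mpr ⟨hWtsub, fun h => hm1notWt (h hm1mem)⟩
  have hlt : Wt.ncard < C1.ncard := Set.ncard_lt_ncard hssub (Set.toFinite _)
  have hd1 : ((C1 \ Wt) \ {-1}).ncard = (C1 \ Wt).ncard - 1 := by
    have hm : (-1 : F) ∈ C1 \ Wt := ⟨hm1mem, hm1notWt⟩
    rw [Set.ncard_diff_singleton_of_mem hm]
  have hd2 : (C1 \ Wt).ncard = C1.ncard - Wt.ncard := Set.ncard_diff hWtsub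
  -- |C0| = |C1|
  have hbij2 : Set.BijOn (fun x => -x) C0 C1 := by
    refine ⟨?_, fun a _ b _ hab => by simpa using hab, ?_⟩
    · intro x hx
      rw [hC0] at hx
      rw [hC1]
      exact ⟨neg_ne_zero.mpr hx.1, fun h => ((key x hx.1).mp h) hx.2⟩
    · intro y hy
      rw [hC1] at hy
      refine ⟨-y, ?_, by simp⟩
      rw [hC0]
      exact ⟨neg_ne_zero.mpr hy.1, (key y hy.1).mpr hy.2⟩
  have hC01 : C0.ncard = C1.ncard := by
    rw [← hbij2.image_eq, Set.ncard_image_of_injOn hbij2.injOn]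
  have hdisj : Disjoint C0 C1 := by
    rw [hC0, hC1, Set.disjoint_left]
    rintro x ⟨-, hsq⟩ ⟨-, hns⟩
    exact hns hsq
  have hunion : C0 ∪ C1 = {x : F | x ≠ 0} := by
    rw [hC0, hC1]
    ext x
    by_cases hx : x = 0 <;> by_cases hs : IsSquare x <;> simp [hx, hs]
  have hcompl : ({x : F | x ≠ 0} : Set F).ncard = Fintype.card F - 1 := by
    have : ({x : F | x ≠ 0} : Set F) = Set.univ \ {0} := by ext x; simp
    rw [this, Set.ncard_diff (Set.subset_univ _), Set.ncard_univ, Set.ncard_singleton,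
      Nat.card_eq_fintype_card]
  have hsum : C0.ncard + C1.ncard = Fintype.card F - 1 := by
    rw [← Set.ncard_union_eq hdisj (Set.toFinite _) (Set.toFinite _), hunion, hcompl]
  have hcardF : 3 ≤ Fintype.card F := by
    have := Fintype.card_pos (α := F)
    omega
  omega
end

section
/- Let s = ht + 1 be a prime power, v = hs, r = t, and let C* be the v×v symmetric matrix C* = r·K_v − (1/s)·L·Lᵀ − (1/(s(s−h)))·(J_h ⊗ K_s) + (h r²/s²)·J_v, where L = ((L_{i−j}))_{i,j ∈ I_h} is the block-circulant matrix built from the coset-difference matrices L_i (L_i(x,y) = 1 iff y−x ∈ C_i). Then the spectrum of C* is: eigenvalue r with multiplicity h−1, eigenvalue r − 1/(s−h) with multiplicity s−1, eigenvalue r−1 with multiplicity (h−1)(s−1), and eigenvalue 0 with multiplicity 1. -/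
open Matrix Polynomial Kronecker
open scoped Classical

set_option linter.unusedVariables false
set_option linter.unusedSectionVars false
set_option maxHeartbeats 1000000

namespace Stmt19


section LinAlg
variable {α : Type*} [Fintype α] [DecidableEq α] [Nonempty α]

noncomputable def W (z0 : α) : Matrix α α ℝ :=
  Matrix.of fun i j => if j = z0 then 1 else if i = z0 then 1 else if i = j then -1 else 0

noncomputable def Winv (z0 : α) : Matrix α α ℝ :=
  Matrix.of fun j i => if i = z0 then ((Fintype.card α : ℝ))⁻¹
    else ((Fintype.card α : ℝ))⁻¹ - if j = i then 1 else 0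

noncomputable def Dg (z0 : α) : Matrix α α ℝ :=
  Matrix.diagonal (fun j => if j = z0 then (Fintype.card α : ℝ) else 0)

lemma W_apply_z0 (z0 i : α) : W z0 i z0 = 1 := by simp [W]

lemma card_ne_zero : ((Fintype.card α : ℝ)) ≠ 0 := by
  exact_mod_cast Fintype.card_ne_zero

lemma W_row_sum (z0 i : α) :
    ∑ j, W z0 i j = if i = z0 then (Fintype.card α : ℝ) else 0 := by
  by_cases hi : i = z0
  · rw [if_pos hi]
    have h1 : ∀ j, W z0 i j = 1 := by
      intro j; simp only [W, Matrix.of_apply]; split_ifs <;> simp_all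
    simp [h1, Finset.card_univ]
  · rw [if_neg hi]
    have h1 : ∀ j, W z0 i j = (if j = z0 then (1:ℝ) else 0) + (if j = i then -1 else 0) := by
      intro j; simp only [W, Matrix.of_apply]
      by_cases h2 : j = z0
      · have h3 : ¬ j = i := fun hc => hi (hc ▸ h2 : i = z0)
        have h4 : ¬ i = j := fun hc => h3 hc.symm
        simp [h2, h3, h4, hi, Ne.symm hi]
      · by_cases h3 : j = i
        · simp [h2, hi, h3.symm]
        · have h4 : ¬ i = j := fun hc => h3 hc.symm
          simp [h2, h3, h4, hi]
    rw [Finset.sum_congr rfl fun j _ => h1 j, Finset.sum_add_distrib]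
    simp [Finset.sum_ite_eq']

lemma W_col_sum (z0 j : α) :
    ∑ i, W z0 i j = if j = z0 then (Fintype.card α : ℝ) else 0 := by
  by_cases hj : j = z0
  · rw [if_pos hj]
    have h1 : ∀ i, W z0 i j = 1 := by intro i; simp [W, hj]
    simp [h1, Finset.card_univ]
  · rw [if_neg hj]
    have h1 : ∀ i, W z0 i j = (if i = z0 then (1:ℝ) else 0) + (if i = j then -1 else 0) := by
      intro i; simp only [W, Matrix.of_apply, if_neg hj]
      by_cases h2 : i = z0
      · have h3 : ¬ i = j := fun hc => hj ((hc.symm.trans h2 : j = z0))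
        simp [h2, h3, Ne.symm hj]
      · by_cases h3 : i = j
        · simp [h2, h3.symm, hj]
        · simp [h2, h3]
    rw [Finset.sum_congr rfl fun i _ => h1 i, Finset.sum_add_distrib]
    simp [Finset.sum_ite_eq']

lemma W_mul_Winv (z0 : α) : W z0 * Winv z0 = 1 := by
  ext i k
  rw [Matrix.mul_apply]
  by_cases hk : k = z0
  · have h1 : ∀ j, Winv z0 j k = ((Fintype.card α : ℝ))⁻¹ := by
      intro j; simp [Winv, hk]
    simp only [h1]
    rw [← Finset.sum_mul, W_row_sum]
    by_cases hi : i = z0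
    · have hik : i = k := hi.trans hk.symm
      rw [if_pos hi, mul_inv_cancel₀ (card_ne_zero (α := α)), hik, Matrix.one_apply_eq]
    · have hik : ¬ i = k := fun hc => hi (hc.trans hk)
      rw [if_neg hi, zero_mul, Matrix.one_apply_ne hik]
  · have h1 : ∀ j, Winv z0 j k =
        ((Fintype.card α : ℝ))⁻¹ - (if j = k then 1 else 0) := by
      intro j; simp [Winv, hk]
    simp only [h1, mul_sub, Finset.sum_sub_distrib]
    rw [← Finset.sum_mul, W_row_sum]
    have h2 : ∑ j, W z0 i j * (if j = k then (1:ℝ) else 0) = W z0 i k := by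
      simp [Finset.sum_ite_eq']
    rw [h2]
    by_cases hi : i = z0
    · have h3 : ¬ i = k := fun hc => hk ((hc.symm.trans hi : k = z0))
      have h4 : W z0 i k = 1 := by simp [W, hk, hi]
      rw [if_pos hi, mul_inv_cancel₀ (card_ne_zero (α := α)), h4, Matrix.one_apply_ne h3]
      norm_num
    · by_cases hik : i = k
      · have h4 : W z0 i k = -1 := by simp [W, hk, hi, hik]
        rw [if_neg hi, zero_mul, h4, hik, Matrix.one_apply_eq]
        norm_num
      · have h4 : W z0 i k = 0 := by simp [W, hk, hi, hik]
        rw [if_neg hi, zero_mul, h4, Matrix.one_apply_ne hik]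
        norm_num

lemma Winv_mul_W (z0 : α) : Winv z0 * W z0 = 1 :=
  (mul_eq_one_comm).mp (W_mul_Winv z0)

lemma J_mul_W (z0 : α) :
    (Matrix.of fun _ _ => (1:ℝ)) * W z0 = W z0 * Dg z0 := by
  ext i j
  rw [Matrix.mul_apply, Dg, Matrix.mul_diagonal]
  simp only [Matrix.of_apply, one_mul]
  rw [W_col_sum]
  by_cases hj : j = z0 <;> simp [hj, W_apply_z0]

end LinAlg


section Charpoly
variable {n : Type*} [Fintype n] [DecidableEq n] {R : Type*} [CommRing R]

lemma charpoly_diagonal (d : n → R) :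
    (Matrix.diagonal d).charpoly = ∏ i, (X - C (d i)) := by
  have h1 : Matrix.charmatrix (Matrix.diagonal d) =
      Matrix.diagonal (fun i => (X : R[X]) - C (d i)) := by
    refine Matrix.ext fun i j => ?_
    by_cases hij : i = j
    · subst hij; simp [Matrix.charmatrix_apply_eq]
    · rw [Matrix.charmatrix_apply_ne _ _ _ hij, Matrix.diagonal_apply_ne _ hij,
        Matrix.diagonal_apply_ne _ hij]
      simp
  rw [Matrix.charpoly, h1, Matrix.det_diagonal]

lemma charmatrix_eq (M : Matrix n n R) :
    Matrix.charmatrix M = (X : R[X]) • (1 : Matrix n n R[X]) - M.map C := by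
  refine Matrix.ext fun i j => ?_
  by_cases hij : i = j
  · subst hij
    rw [Matrix.charmatrix_apply_eq]
    simp [Matrix.one_apply, Matrix.map_apply]
  · rw [Matrix.charmatrix_apply_ne _ _ _ hij]
    simp [Matrix.one_apply_ne hij, Matrix.map_apply]

lemma charpoly_conj (P Q M : Matrix n n R) (h1 : P * Q = 1) (h2 : Q * P = 1) :
    (P * M * Q).charpoly = M.charpoly := by
  have hmap : ∀ A B : Matrix n n R, (A * B).map (C : R →+* R[X]) =
      A.map (C : R →+* R[X]) * B.map (C : R →+* R[X]) := fun A B => Matrix.map_mul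
  have key : Matrix.charmatrix (P * M * Q) =
      P.map (C : R →+* R[X]) * Matrix.charmatrix M * Q.map (C : R →+* R[X]) := by
    rw [charmatrix_eq, charmatrix_eq, mul_sub, sub_mul]
    congr 1
    · rw [mul_smul_comm, smul_mul_assoc, mul_one, ← hmap, h1]
      simp
    · rw [hmap, hmap]
  rw [Matrix.charpoly, key, Matrix.det_mul, Matrix.det_mul, Matrix.charpoly]
  calc (P.map (C : R →+* R[X])).det * (Matrix.charmatrix M).det *
      (Q.map (C : R →+* R[X])).det
      = (P.map (C : R →+* R[X])).det * (Q.map (C : R →+* R[X])).det *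
        (Matrix.charmatrix M).det := by ring
    _ = (Matrix.charmatrix M).det := by
        rw [← Matrix.det_mul, ← hmap, h1]
        simp

end Charpoly

set_option linter.unusedSectionVars false

section Comb
variable {h t : ℕ} [NeZero h] {F : Type*} [Field F] [Fintype F]

noncomputable def ind (φ : Fˣ →* Multiplicative (ZMod h)) (x : F) : ZMod h :=
  if hx : x = 0 then 0 else Multiplicative.toAdd (φ (Units.mk0 x hx))

variable (φ : Fˣ →* Multiplicative (ZMod h))

lemma ind_unit (u : Fˣ) : ind φ (u : F) = Multiplicative.toAdd (φ u) := by
  rw [ind, dif_neg (Units.ne_zero u)]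
  congr 1
  exact congrArg φ (Units.mk0_val u (Units.ne_zero u))

lemma ind_one : ind φ 1 = 0 := by
  have := ind_unit φ 1
  simpa using this

lemma ind_mul {x y : F} (hx : x ≠ 0) (hy : y ≠ 0) :
    ind φ (x * y) = ind φ x + ind φ y := by
  have hxy : x * y ≠ 0 := mul_ne_zero hx hy
  rw [ind, ind, ind, dif_neg hx, dif_neg hy, dif_neg hxy]
  have : Units.mk0 (x * y) hxy = Units.mk0 x hx * Units.mk0 y hy := by
    ext; simp
  rw [this, _root_.map_mul]
  rfl

lemma ind_div {x y : F} (hx : x ≠ 0) (hy : y ≠ 0) :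
    ind φ (x / y) = ind φ x - ind φ y := by
  have hxy : x / y ≠ 0 := div_ne_zero hx hy
  have h1 : x / y * y = x := div_mul_cancel₀ x hy
  have h2 := ind_mul φ hxy hy
  rw [h1] at h2
  rw [h2, add_sub_cancel_right]

lemma mem_C_iff (C : ZMod h → Set F)
    (hC : ∀ i, C i = {x : F | ∃ u : Fˣ, (u : F) = x ∧ φ u = Multiplicative.ofAdd i})
    (m : ZMod h) (x : F) : x ∈ C m ↔ x ≠ 0 ∧ ind φ x = m := by
  rw [hC]
  constructor
  · rintro ⟨u, hu, hφu⟩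
    refine ⟨hu ▸ Units.ne_zero u, ?_⟩
    rw [← hu, ind_unit, hφu]
    rfl
  · rintro ⟨hx, hind⟩
    refine ⟨Units.mk0 x hx, rfl, ?_⟩
    rw [ind, dif_neg hx] at hind
    rw [← hind]
    rfl

noncomputable def fib (φ : Fˣ →* Multiplicative (ZMod h)) (d : ZMod h) : Finset F :=
  Finset.univ.filter fun x : F => x ≠ 0 ∧ ind φ x = d

lemma card_fib_eq (hφ : Function.Surjective φ) (d : ZMod h) :
    (fib φ d).card = (fib φ 0).card := by
  obtain ⟨u0, hu0⟩ := hφ (Multiplicative.ofAdd d)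
  have hind0 : ind φ (u0 : F) = d := by rw [ind_unit, hu0]; rfl
  have hindinv : ind φ ((u0 : F)⁻¹) = -d := by
    have h2 := ind_mul φ (inv_ne_zero (Units.ne_zero u0)) (Units.ne_zero u0)
    rw [inv_mul_cancel₀ (Units.ne_zero u0), ind_one, hind0] at h2
    linear_combination -h2
  refine Finset.card_nbij' (fun x => (u0 : F)⁻¹ * x) (fun x => (u0 : F) * x) ?_ ?_ ?_ ?_
  · intro x hx
    rw [fib, Finset.mem_coe, Finset.mem_filter] at hx ⊢
    obtain ⟨-, hx0, hxd⟩ := hx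
    refine ⟨Finset.mem_univ _, mul_ne_zero (inv_ne_zero (Units.ne_zero u0)) hx0, ?_⟩
    rw [ind_mul φ (inv_ne_zero (Units.ne_zero u0)) hx0, hindinv, hxd]; ring
  · intro x hx
    rw [fib, Finset.mem_coe, Finset.mem_filter] at hx ⊢
    obtain ⟨-, hx0, hxd⟩ := hx
    refine ⟨Finset.mem_univ _, mul_ne_zero (Units.ne_zero u0) hx0, ?_⟩
    rw [ind_mul φ (Units.ne_zero u0) hx0, hind0, hxd]; ring
  · intro x _; field_simp
  · intro x _; field_simp

lemma card_fib (hs : Fintype.card F = h * t + 1) (hφ : Function.Surjective φ)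
    (d : ZMod h) : (fib φ d).card = t := by
  have hsum : ∑ e : ZMod h, (fib φ e).card = h * t := by
    have h1 : (Finset.univ.filter fun x : F => x ≠ 0).card =
        ∑ e : ZMod h, ((Finset.univ.filter fun x : F => x ≠ 0).filter
          fun x => ind φ x = e).card := by
      exact Finset.card_eq_sum_card_fiberwise fun x _ => Finset.mem_univ _
    have h2 : ∀ e : ZMod h, ((Finset.univ.filter fun x : F => x ≠ 0).filter
        fun x => ind φ x = e) = fib φ e := by
      intro e; rw [Finset.filter_filter]; rfl
    have h3 : (Finset.univ.filter fun x : F => x ≠ 0).card = h * t := by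
      rw [Finset.filter_ne', Finset.card_erase_of_mem (Finset.mem_univ _),
        Finset.card_univ, hs]
      simp
    rw [← h3, h1]
    exact Finset.sum_congr rfl fun e _ => by rw [h2]
  have hconst : ∑ e : ZMod h, (fib φ e).card = h * (fib φ 0).card := by
    rw [Finset.sum_congr rfl fun e _ => card_fib_eq φ hφ e, Finset.sum_const,
      Finset.card_univ, ZMod.card, smul_eq_mul]
  have h0 : (fib φ 0).card = t :=
    Nat.eq_of_mul_eq_mul_left (Nat.pos_of_ne_zero (NeZero.ne h))
      (by rw [← hconst, hsum])
  rw [card_fib_eq φ hφ d, h0]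

lemma LLt_apply (hs : Fintype.card F = h * t + 1) (hφ : Function.Surjective φ)
    (ht1 : 1 ≤ t)
    (C : ZMod h → Set F)
    (hC : ∀ i, C i = {x : F | ∃ u : Fˣ, (u : F) = x ∧ φ u = Multiplicative.ofAdd i})
    (L : Matrix (ZMod h × F) (ZMod h × F) ℝ)
    (hL : ∀ p q : ZMod h × F,
      L p q = if q.2 - p.2 ∈ C (p.1 - q.1) then (1 : ℝ) else 0)
    (p q : ZMod h × F) :
    (L * Lᵀ) p q = if p.2 = q.2
      then (if p.1 = q.1 then ((h * t : ℕ) : ℝ) else 0)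
      else ((t : ℝ) - if p.1 = q.1 then 1 else 0) := by
  rw [Matrix.mul_apply]
  have hterm : ∀ c : ZMod h × F, L p c * Lᵀ c q =
      if (c.2 - p.2 ∈ C (p.1 - c.1)) ∧ (c.2 - q.2 ∈ C (q.1 - c.1)) then (1:ℝ) else 0 := by
    intro c
    rw [Matrix.transpose_apply, hL, hL]
    by_cases hA : c.2 - p.2 ∈ C (p.1 - c.1) <;>
      by_cases hB : c.2 - q.2 ∈ C (q.1 - c.1) <;> simp [hA, hB]
  rw [Finset.sum_congr rfl fun c _ => hterm c, Finset.sum_boole]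
  set T : Finset F := Finset.univ.filter
    (fun z : F => z ≠ p.2 ∧ z ≠ q.2 ∧
      ind φ (z - p.2) - ind φ (z - q.2) = p.1 - q.1) with hT
  have hcards : (Finset.univ.filter fun c : ZMod h × F =>
      (c.2 - p.2 ∈ C (p.1 - c.1)) ∧ (c.2 - q.2 ∈ C (q.1 - c.1))).card = T.card := by
    refine Finset.card_nbij' (fun c => c.2)
      (fun z => (p.1 - ind φ (z - p.2), z)) ?_ ?_ ?_ ?_
    · intro c hc
      rw [Finset.mem_coe, Finset.mem_filter] at hc
      obtain ⟨-, h1, h2⟩ := hc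
      rw [mem_C_iff φ C hC] at h1 h2
      simp only [hT, Finset.mem_coe, Finset.mem_filter]
      refine ⟨Finset.mem_univ _, sub_ne_zero.mp h1.1, sub_ne_zero.mp h2.1, ?_⟩
      rw [h1.2, h2.2]; ring
    · intro z hz
      simp only [hT, Finset.mem_coe, Finset.mem_filter] at hz
      obtain ⟨-, hzp, hzq, hdiff⟩ := hz
      rw [Finset.mem_coe, Finset.mem_filter]
      refine ⟨Finset.mem_univ _, ?_, ?_⟩
      · rw [mem_C_iff φ C hC]
        exact ⟨sub_ne_zero.mpr hzp, by ring⟩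
      · rw [mem_C_iff φ C hC]
        exact ⟨sub_ne_zero.mpr hzq, by linear_combination -hdiff⟩
    · intro c hc
      rw [Finset.mem_coe, Finset.mem_filter] at hc
      obtain ⟨-, h1, -⟩ := hc
      rw [mem_C_iff φ C hC] at h1
      exact Prod.ext (by show p.1 - ind φ (c.2 - p.2) = c.1; rw [h1.2, sub_sub_cancel]) rfl
    · intro z _; rfl
  rw [hcards]
  by_cases hxy : p.2 = q.2
  · by_cases hij : p.1 = q.1
    · have hTeq : T = Finset.univ.filter (fun z : F => z ≠ p.2) := by
        ext z
        rw [hT, Finset.mem_filter, Finset.mem_filter]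
        constructor
        · rintro ⟨hu, h1, -, -⟩; exact ⟨hu, h1⟩
        · rintro ⟨hu, h1⟩
          exact ⟨hu, h1, hxy ▸ h1, by rw [← hxy, sub_self, hij, sub_self]⟩
      rw [hTeq, Finset.filter_ne', Finset.card_erase_of_mem (Finset.mem_univ _),
        Finset.card_univ, hs]
      simp [hxy, hij]
    · have hTeq : T = ∅ := by
        rw [hT, Finset.eq_empty_iff_forall_notMem]
        intro z hz
        rw [Finset.mem_filter] at hz
        obtain ⟨-, -, -, hdiff⟩ := hz
        rw [← hxy, sub_self] at hdiff
        exact hij (sub_eq_zero.mp (by linear_combination -hdiff))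
      rw [hTeq]
      simp [hxy, hij]
  · -- p.2 ≠ q.2 : biject T with fib minus {1}
    have hpq : q.2 - p.2 ≠ 0 := sub_ne_zero.mpr (Ne.symm hxy)
    set T' : Finset F := Finset.univ.filter
      (fun w : F => w ≠ 0 ∧ w ≠ 1 ∧ ind φ w = p.1 - q.1) with hT'
    have hbij : T.card = T'.card := by
      refine Finset.card_nbij' (fun z => (z - p.2) / (z - q.2))
        (fun w => (w * q.2 - p.2) / (w - 1)) ?_ ?_ ?_ ?_
      · intro z hz
        simp only [hT, Finset.mem_coe, Finset.mem_filter] at hz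
        obtain ⟨-, hzp, hzq, hdiff⟩ := hz
        have hzp' : z - p.2 ≠ 0 := sub_ne_zero.mpr hzp
        have hzq' : z - q.2 ≠ 0 := sub_ne_zero.mpr hzq
        simp only [hT', Finset.mem_coe, Finset.mem_filter]
        refine ⟨Finset.mem_univ _, div_ne_zero hzp' hzq', ?_, ?_⟩
        · intro hw
          rw [div_eq_one_iff_eq hzq'] at hw
          exact hxy (sub_right_inj.mp hw)
        · rw [ind_div φ hzp' hzq', hdiff]
      · intro w hw
        simp only [hT', Finset.mem_coe, Finset.mem_filter] at hw
        obtain ⟨-, hw0, hw1, hwd⟩ := hw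
        have hw1' : w - 1 ≠ 0 := sub_ne_zero.mpr hw1
        have e1 : (w * q.2 - p.2) / (w - 1) - p.2 = w * (q.2 - p.2) / (w - 1) := by
          field_simp; ring
        have e2 : (w * q.2 - p.2) / (w - 1) - q.2 = (q.2 - p.2) / (w - 1) := by
          field_simp; ring
        have hzp' : (w * q.2 - p.2) / (w - 1) - p.2 ≠ 0 := by
          rw [e1]; exact div_ne_zero (mul_ne_zero hw0 hpq) hw1'
        have hzq' : (w * q.2 - p.2) / (w - 1) - q.2 ≠ 0 := by
          rw [e2]; exact div_ne_zero hpq hw1'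
        simp only [hT, Finset.mem_coe, Finset.mem_filter]
        refine ⟨Finset.mem_univ _, sub_ne_zero.mp hzp', sub_ne_zero.mp hzq', ?_⟩
        rw [← ind_div φ hzp' hzq']
        have e3 : ((w * q.2 - p.2) / (w - 1) - p.2) / ((w * q.2 - p.2) / (w - 1) - q.2)
            = w := by
          rw [e1, e2, div_div_div_cancel_right₀ hw1']
          exact mul_div_cancel_right₀ w hpq
        rw [e3, hwd]
      · intro z hz
        simp only [hT, Finset.mem_coe, Finset.mem_filter] at hz
        obtain ⟨-, hzp, hzq, -⟩ := hz
        have hzp' : z - p.2 ≠ 0 := sub_ne_zero.mpr hzp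
        have hzq' : z - q.2 ≠ 0 := sub_ne_zero.mpr hzq
        have hb : (z - p.2) / (z - q.2) - 1 ≠ 0 := by
          rw [div_sub_one hzq']
          have : z - p.2 - (z - q.2) = q.2 - p.2 := by ring
          rw [this]
          exact div_ne_zero hpq hzq'
        show ((z - p.2) / (z - q.2) * q.2 - p.2) / ((z - p.2) / (z - q.2) - 1) = z
        rw [div_sub_one hzq']
        have hnum : (z - p.2) / (z - q.2) * q.2 - p.2
            = ((q.2 - p.2) * z) / (z - q.2) := by field_simp; ring
        have hden : z - p.2 - (z - q.2) = q.2 - p.2 := by ring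
        rw [hnum, hden, div_div_div_cancel_right₀ hzq']
        exact mul_div_cancel_left₀ z hpq
      · intro w hw
        simp only [hT', Finset.mem_coe, Finset.mem_filter] at hw
        obtain ⟨-, hw0, hw1, -⟩ := hw
        have hw1' : w - 1 ≠ 0 := sub_ne_zero.mpr hw1
        have e1 : (w * q.2 - p.2) / (w - 1) - p.2 = w * (q.2 - p.2) / (w - 1) := by
          field_simp; ring
        have e2 : (w * q.2 - p.2) / (w - 1) - q.2 = (q.2 - p.2) / (w - 1) := by
          field_simp; ring
        show ((w * q.2 - p.2) / (w - 1) - p.2) / ((w * q.2 - p.2) / (w - 1) - q.2) = w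
        rw [e1, e2, div_div_div_cancel_right₀ hw1']
        exact mul_div_cancel_right₀ w hpq
    have hT'eq : T' = (fib φ (p.1 - q.1)).erase 1 := by
      rw [← Finset.filter_ne' (fib φ (p.1 - q.1)) 1]
      ext w
      rw [hT', Finset.mem_filter, Finset.mem_filter, fib, Finset.mem_filter]
      constructor
      · rintro ⟨hu, h1, h2, h3⟩; exact ⟨⟨hu, h1, h3⟩, h2⟩
      · rintro ⟨⟨hu, h1, h3⟩, h2⟩; exact ⟨hu, h1, h2, h3⟩
    rw [hbij, hT'eq]
    by_cases hij : p.1 = q.1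
    · have h1mem : (1 : F) ∈ fib φ (p.1 - q.1) := by
        rw [fib, Finset.mem_filter]
        exact ⟨Finset.mem_univ _, one_ne_zero, by rw [ind_one, hij, sub_self]⟩
      rw [Finset.card_erase_of_mem h1mem, card_fib φ hs hφ]
      rw [if_neg hxy, if_pos hij]
      rw [Nat.cast_sub ht1]
      norm_num
    · have h1mem : (1 : F) ∉ fib φ (p.1 - q.1) := by
        rw [fib, Finset.mem_filter]
        rintro ⟨-, -, h3⟩
        rw [ind_one] at h3
        exact hij (sub_eq_zero.mp h3.symm)
      rw [Finset.erase_eq_of_notMem h1mem, card_fib φ hs hφ]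
      rw [if_neg hxy, if_neg hij]
      norm_num

end Comb

lemma prod_ite_eq_pow {α : Type*} [Fintype α] [DecidableEq α] (z0 : α)
    {M : Type*} [CommMonoid M] (A B : M) :
    ∏ x : α, (if x = z0 then A else B) = A * B ^ (Fintype.card α - 1) := by
  rw [← Finset.mul_prod_erase Finset.univ _ (Finset.mem_univ z0), if_pos rfl]
  congr 1
  rw [Finset.prod_congr rfl (fun x hx => if_neg (Finset.ne_of_mem_erase hx)),
    Finset.prod_const, Finset.card_erase_of_mem (Finset.mem_univ z0), Finset.card_univ]

def gcomb {α β : Type*} [DecidableEq α] [DecidableEq β] (a b d e ca cb : ℝ)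
    (z0 : α) (z1 : β) (p : α × β) : ℝ :=
  a * ((if p.1 = z0 then ca else 0) * (if p.2 = z1 then cb else 0))
    + b * (if p.1 = z0 then ca else 0) + d * (if p.2 = z1 then cb else 0) + e

section Conj
variable {α β : Type*} [Fintype α] [DecidableEq α] [Nonempty α]
  [Fintype β] [DecidableEq β] [Nonempty β]

lemma charpoly_combination (z0 : α) (z1 : β) (a b d e : ℝ) :
    (a • ((Matrix.of fun _ _ : α => (1:ℝ)) ⊗ₖ (Matrix.of fun _ _ : β => (1:ℝ)))
      + b • ((Matrix.of fun _ _ : α => (1:ℝ)) ⊗ₖ (1 : Matrix β β ℝ))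
      + d • ((1 : Matrix α α ℝ) ⊗ₖ (Matrix.of fun _ _ : β => (1:ℝ)))
      + e • ((1 : Matrix α α ℝ) ⊗ₖ (1 : Matrix β β ℝ))).charpoly
    = ∏ p : α × β, (X - C (gcomb a b d e (Fintype.card α : ℝ) (Fintype.card β : ℝ) z0 z1 p)) := by
  set M := (a • ((Matrix.of fun _ _ : α => (1:ℝ)) ⊗ₖ (Matrix.of fun _ _ : β => (1:ℝ)))
      + b • ((Matrix.of fun _ _ : α => (1:ℝ)) ⊗ₖ (1 : Matrix β β ℝ))
      + d • ((1 : Matrix α α ℝ) ⊗ₖ (Matrix.of fun _ _ : β => (1:ℝ)))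
      + e • ((1 : Matrix α α ℝ) ⊗ₖ (1 : Matrix β β ℝ))) with hM
  set gv : α × β → ℝ := gcomb a b d e (Fintype.card α : ℝ) (Fintype.card β : ℝ) z0 z1 with hgv
  set P := W z0 ⊗ₖ W z1 with hP
  set Q := Winv z0 ⊗ₖ Winv z1 with hQ
  have hPQ : P * Q = 1 := by
    rw [hP, hQ, ← Matrix.mul_kronecker_mul, W_mul_Winv, W_mul_Winv,
      Matrix.one_kronecker_one]
  have hQP : Q * P = 1 := by
    rw [hP, hQ, ← Matrix.mul_kronecker_mul, Winv_mul_W, Winv_mul_W,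
      Matrix.one_kronecker_one]
  have e1 : ((Matrix.of fun _ _ : α => (1:ℝ)) ⊗ₖ (Matrix.of fun _ _ : β => (1:ℝ))) * P
      = P * (Dg z0 ⊗ₖ Dg z1) := by
    rw [hP, ← Matrix.mul_kronecker_mul, J_mul_W, J_mul_W, Matrix.mul_kronecker_mul]
  have e2 : ((Matrix.of fun _ _ : α => (1:ℝ)) ⊗ₖ (1 : Matrix β β ℝ)) * P
      = P * (Dg z0 ⊗ₖ (1 : Matrix β β ℝ)) := by
    rw [hP, ← Matrix.mul_kronecker_mul, J_mul_W, one_mul]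
    nth_rewrite 1 [show (W z1 : Matrix β β ℝ) = W z1 * 1 from (mul_one _).symm]
    rw [Matrix.mul_kronecker_mul]
  have e3 : ((1 : Matrix α α ℝ) ⊗ₖ (Matrix.of fun _ _ : β => (1:ℝ))) * P
      = P * ((1 : Matrix α α ℝ) ⊗ₖ Dg z1) := by
    rw [hP, ← Matrix.mul_kronecker_mul, J_mul_W, one_mul]
    nth_rewrite 1 [show (W z0 : Matrix α α ℝ) = W z0 * 1 from (mul_one _).symm]
    rw [Matrix.mul_kronecker_mul]
  have e4 : ((1 : Matrix α α ℝ) ⊗ₖ (1 : Matrix β β ℝ)) * P = P * ((1 : Matrix α α ℝ) ⊗ₖ (1 : Matrix β β ℝ)) := by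
    rw [Matrix.one_kronecker_one, one_mul, mul_one]
  have hdiag : a • (Dg z0 ⊗ₖ Dg z1) + b • (Dg z0 ⊗ₖ (1 : Matrix β β ℝ))
      + d • ((1 : Matrix α α ℝ) ⊗ₖ Dg z1) + e • ((1 : Matrix α α ℝ) ⊗ₖ (1 : Matrix β β ℝ))
      = Matrix.diagonal gv := by
    rw [show (1 : Matrix α α ℝ) = Matrix.diagonal (fun _ => (1:ℝ)) from (Matrix.diagonal_one).symm,
      show (1 : Matrix β β ℝ) = Matrix.diagonal (fun _ => (1:ℝ)) from (Matrix.diagonal_one).symm,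
      Dg, Dg, Matrix.diagonal_kronecker_diagonal, Matrix.diagonal_kronecker_diagonal,
      Matrix.diagonal_kronecker_diagonal, Matrix.diagonal_kronecker_diagonal,
      ← Matrix.diagonal_smul, ← Matrix.diagonal_smul, ← Matrix.diagonal_smul,
      ← Matrix.diagonal_smul, Matrix.diagonal_add, Matrix.diagonal_add, Matrix.diagonal_add]
    refine congrArg Matrix.diagonal (funext fun p => ?_)
    simp only [Pi.add_apply, Pi.smul_apply, smul_eq_mul, hgv, gcomb]
    by_cases h1 : p.1 = z0 <;> by_cases h2 : p.2 = z1 <;> simp [h1, h2] <;> ring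
  have hMP : M * P = P * Matrix.diagonal gv := by
    rw [hM, add_mul, add_mul, add_mul, smul_mul_assoc, smul_mul_assoc, smul_mul_assoc,
      smul_mul_assoc, e1, e2, e3, e4, ← mul_smul_comm, ← mul_smul_comm, ← mul_smul_comm,
      ← mul_smul_comm, ← mul_add, ← mul_add, ← mul_add, hdiag]
  have hMeq : M = P * Matrix.diagonal gv * Q := by
    have h1 : M = M * (P * Q) := by rw [hPQ, mul_one]
    rw [h1, ← mul_assoc, hMP]
  rw [hMeq, charpoly_conj P Q _ hPQ hQP, charpoly_diagonal]

end Conj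

end Stmt19

/-- Theorem `spectrN(1)`. Let F be the field of order s = ht+1,
C_i the cosets of the index-h subgroup of F* (fibers of a surjective
homomorphism φ : F* → ℤ/h, so C_i·C_j = C_{i+j}), r = t, v = hs, and
L the v×v block matrix with (i,j) block L_{i−j}, where L_k(x,y) = 1 iff
y − x ∈ C_k. Then the matrix
C* = r·K_v − (1/s)·L·Lᵀ − (1/(s(s−h)))·(J_h ⊗ K_s) + (hr²/s²)·J_v
has spectrum r^{h−1} (r − 1/(s−h))^{s−1} (r−1)^{(h−1)(s−1)} 0¹. -/
theorem stmt_19 (h t : ℕ) [NeZero h] (F : Type*) [Field F] [Fintype F]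
    (hs : Fintype.card F = h * t + 1) (hh : 2 ≤ h) (ht : 2 ≤ t)
    (φ : Fˣ →* Multiplicative (ZMod h)) (hφ : Function.Surjective φ)
    (C : ZMod h → Set F)
    (hC : ∀ i, C i = {x : F | ∃ u : Fˣ, (u : F) = x ∧ φ u = Multiplicative.ofAdd i})
    (L : Matrix (ZMod h × F) (ZMod h × F) ℝ)
    (hL : ∀ p q : ZMod h × F,
      L p q = if q.2 - p.2 ∈ C (p.1 - q.1) then (1 : ℝ) else 0)
    (s r : ℝ) (hsr : s = (Fintype.card F : ℝ)) (hr : r = (t : ℝ))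
    (Cstar : Matrix (ZMod h × F) (ZMod h × F) ℝ)
    (hCstar : Cstar =
      r • ((1 : Matrix (ZMod h × F) (ZMod h × F) ℝ) -
            (1 / ((h : ℝ) * s)) • Matrix.of (fun _ _ => (1 : ℝ)))
        - (1 / s) • (L * Lᵀ)
        - (1 / (s * (s - (h : ℝ)))) •
            ((Matrix.of (fun _ _ : ZMod h => (1 : ℝ))) ⊗ₖ
              ((1 : Matrix F F ℝ) -
                (1 / s) • Matrix.of (fun _ _ : F => (1 : ℝ))))
        + ((h : ℝ) * r ^ 2 / s ^ 2) • Matrix.of (fun _ _ => (1 : ℝ))) :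
    Cstar.charpoly =
      (X - Polynomial.C r) ^ (h - 1) *
        (X - Polynomial.C (r - 1 / (s - (h : ℝ)))) ^ (Fintype.card F - 1) *
        (X - Polynomial.C (r - 1)) ^ ((h - 1) * (Fintype.card F - 1)) * X := by
  classical
  have h1R : (1:ℝ) ≤ (h:ℝ) := by exact_mod_cast Nat.one_le_of_lt hh
  have t1R : (1:ℝ) ≤ (t:ℝ) := by exact_mod_cast Nat.one_le_of_lt ht
  have hseq : s = (h:ℝ) * (t:ℝ) + 1 := by rw [hsr, hs]; push_cast; ring
  have hh0 : (h:ℝ) ≠ 0 := by linarith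
  have hA : (h:ℝ) * (t:ℝ) + 1 ≠ 0 := by nlinarith
  have hB : (h:ℝ) * (t:ℝ) + 1 - (h:ℝ) ≠ 0 := by
    nlinarith [mul_nonneg (by linarith : (0:ℝ) ≤ (h:ℝ)) (by linarith : (0:ℝ) ≤ (t:ℝ) - 1)]
  have hs0 : s ≠ 0 := by rw [hseq]; exact hA
  have hsh0 : s - (h:ℝ) ≠ 0 := by rw [hseq]; exact hB
  have hcf : ((Fintype.card F : ℕ) : ℝ) = s := hsr.symm
  have hch : ((Fintype.card (ZMod h) : ℕ) : ℝ) = (h:ℝ) := by rw [ZMod.card]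
  -- Step 1 : L * Lᵀ in Kronecker form
  have hLLt : L * Lᵀ = (t:ℝ) • ((Matrix.of fun _ _ : ZMod h => (1:ℝ)) ⊗ₖ (Matrix.of fun _ _ : F => (1:ℝ)))
      - (t:ℝ) • ((Matrix.of fun _ _ : ZMod h => (1:ℝ)) ⊗ₖ (1 : Matrix F F ℝ))
      - ((1 : Matrix (ZMod h) (ZMod h) ℝ) ⊗ₖ (Matrix.of fun _ _ : F => (1:ℝ)))
      + s • (1 : Matrix (ZMod h × F) (ZMod h × F) ℝ) := by
    refine Matrix.ext fun p q => ?_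
    rw [Stmt19.LLt_apply φ hs hφ (le_trans one_le_two ht) C hC L hL p q]
    simp only [Matrix.add_apply, Matrix.sub_apply, Matrix.smul_apply,
      Matrix.kroneckerMap_apply, Matrix.of_apply, Matrix.one_apply, smul_eq_mul,
      Prod.ext_iff]
    by_cases h1 : p.1 = q.1 <;> by_cases h2 : p.2 = q.2 <;>
      simp only [h1, h2, if_true, if_false, and_true, and_false, true_and, false_and,
        Nat.cast_mul] <;>
      simp [hseq] <;> ring
  -- Step 2 : Cstar as a linear combination of Kronecker products
  have hCstar2 : Cstar =
      ((h:ℝ) * r^2 / s^2 - r * (1/((h:ℝ)*s)) - (1/s) * (t:ℝ) + (1/(s*(s-(h:ℝ)))) * (1/s)) •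
        ((Matrix.of fun _ _ : ZMod h => (1:ℝ)) ⊗ₖ (Matrix.of fun _ _ : F => (1:ℝ)))
      + ((1/s) * (t:ℝ) - (1/(s*(s-(h:ℝ))))) •
        ((Matrix.of fun _ _ : ZMod h => (1:ℝ)) ⊗ₖ (1 : Matrix F F ℝ))
      + (1/s) • ((1 : Matrix (ZMod h) (ZMod h) ℝ) ⊗ₖ (Matrix.of fun _ _ : F => (1:ℝ)))
      + (r - (1/s) * s) • ((1 : Matrix (ZMod h) (ZMod h) ℝ) ⊗ₖ (1 : Matrix F F ℝ)) := by
    rw [hCstar, hLLt]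
    refine Matrix.ext fun p q => ?_
    simp only [Matrix.add_apply, Matrix.sub_apply, Matrix.smul_apply,
      Matrix.kroneckerMap_apply, Matrix.of_apply, Matrix.one_apply, smul_eq_mul,
      Prod.ext_iff]
    by_cases h1 : p.1 = q.1 <;> by_cases h2 : p.2 = q.2 <;>
      simp only [h1, h2, if_true, if_false, and_true, and_false, true_and, false_and] <;>
      ring
  -- Step 3 : charpoly via diagonalization
  rw [hCstar2, Stmt19.charpoly_combination (0 : ZMod h) (0 : F)]
  -- Step 4 : evaluate the eigenvalues
  have hgval : ∀ p : ZMod h × F,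
      X - Polynomial.C (Stmt19.gcomb
        ((h:ℝ) * r^2 / s^2 - r * (1/((h:ℝ)*s)) - (1/s) * (t:ℝ) + (1/(s*(s-(h:ℝ)))) * (1/s))
        ((1/s) * (t:ℝ) - (1/(s*(s-(h:ℝ)))))
        (1/s) (r - (1/s) * s)
        ((Fintype.card (ZMod h) : ℕ) : ℝ) ((Fintype.card F : ℕ) : ℝ) 0 0 p)
      = if p.1 = 0 then (if p.2 = 0 then X else (X - Polynomial.C (r - 1/(s - (h:ℝ)))))
        else (if p.2 = 0 then (X - Polynomial.C r) else (X - Polynomial.C (r - 1))) := by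
    intro p
    rw [Stmt19.gcomb, hch, hcf]
    by_cases h1 : p.1 = 0 <;> by_cases h2 : p.2 = 0 <;>
        simp only [h1, h2, if_true, if_false, mul_zero, zero_mul, add_zero, zero_add, mul_one]
    · have hv : ((h:ℝ) * r^2 / s^2 - r * (1/((h:ℝ)*s)) - (1/s) * (t:ℝ)
          + (1/(s*(s-(h:ℝ)))) * (1/s)) * ((h:ℝ) * s)
          + ((1/s) * (t:ℝ) - (1/(s*(s-(h:ℝ))))) * (h:ℝ) + (1/s) * s + (r - (1/s) * s)
          = 0 := by
        rw [hr, hseq]; field_simp; ring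
      rw [hv, map_zero, sub_zero]
    · have hv : ((1/s) * (t:ℝ) - (1/(s*(s-(h:ℝ))))) * (h:ℝ) + (r - (1/s) * s)
          = r - 1/(s - (h:ℝ)) := by
        rw [hr, hseq]; field_simp; ring
      rw [hv]
    · have hv : (1/s) * s + (r - (1/s) * s) = r := by rw [one_div_mul_cancel hs0]; ring
      rw [hv]
    · have hv : r - (1/s) * s = r - 1 := by field_simp
      rw [hv]
  rw [Finset.prod_congr rfl fun p _ => hgval p, Fintype.prod_prod_type]
  have hinner : ∀ i : ZMod h,
      (∏ x : F, if (i, x).1 = 0 then (if (i, x).2 = 0 then X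
          else (X - Polynomial.C (r - 1/(s - (h:ℝ)))))
        else (if (i, x).2 = 0 then (X - Polynomial.C r) else (X - Polynomial.C (r - 1))))
      = if i = 0 then X * (X - Polynomial.C (r - 1/(s - (h:ℝ)))) ^ (Fintype.card F - 1)
        else (X - Polynomial.C r) * (X - Polynomial.C (r - 1)) ^ (Fintype.card F - 1) := by
    intro i
    by_cases hi : i = 0
    · rw [if_pos hi,
        Finset.prod_congr rfl fun x _ => if_pos (show (i, x).1 = 0 from hi)]
      exact Stmt19.prod_ite_eq_pow (0 : F) X (X - Polynomial.C (r - 1/(s - (h:ℝ))))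
    · rw [if_neg hi,
        Finset.prod_congr rfl fun x _ => if_neg (show ¬ (i, x).1 = 0 from hi)]
      exact Stmt19.prod_ite_eq_pow (0 : F) (X - Polynomial.C r) (X - Polynomial.C (r - 1))
  rw [Finset.prod_congr rfl fun i _ => hinner i, Stmt19.prod_ite_eq_pow, ZMod.card]
  rw [mul_pow, ← pow_mul]
  ring
end
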